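/- arXiv:1909.12052 — 9 statements merged into one kernel-verified Lean document; each statement's English description precedes it below -/
import Mathlib

section
/- For all integers n ≥ 1 and s ≥ 0, the Thue–Morse polynomial satisfies T(2^s·n; x) = T(n; x^{2^s})·T(2^s; x). -/
open Polynomial Finset

/-- The Thue–Morse sequence: `t n = (-1)^(binary digit sum of n)`,
so `t 0 = 1`, `t (2n) = t n`, `t (2n+1) = -t n`. -/
def thueMorse (n : ℕ) : ℤ := (-1) ^ (Nat.digits 2 n).sum

/-- The Thue–Morse polynomial `T(n; x) = ∑_{m=0}^{n-1} t(m) x^m ∈ ℤ[x]`. -/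
noncomputable def tmPoly (n : ℕ) : Polynomial ℤ :=
  ∑ m ∈ Finset.range n, Polynomial.C (thueMorse m) * Polynomial.X ^ m

lemma tm_two_mul (m : ℕ) : thueMorse (2 * m) = thueMorse m := by
  rcases Nat.eq_zero_or_pos m with h | h
  · simp [h]
  · unfold thueMorse
    rw [Nat.digits_def' (by norm_num : (1:ℕ) < 2) (by omega)]
    simp [Nat.mul_mod_right, Nat.mul_div_cancel_left _ (by norm_num : 0 < 2)]

lemma tm_two_mul_add_one (m : ℕ) : thueMorse (2 * m + 1) = - thueMorse m := by
  unfold thueMorse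
  rw [Nat.digits_def' (by norm_num : (1:ℕ) < 2) (by omega)]
  have h1 : (2 * m + 1) % 2 = 1 := by omega
  have h2 : (2 * m + 1) / 2 = m := by omega
  rw [h1, h2]
  simp [pow_add, pow_succ]

lemma tmPoly_succ (n : ℕ) : tmPoly (n + 1) = tmPoly n + C (thueMorse n) * X ^ n := by
  rw [tmPoly, Finset.sum_range_succ]; rfl

lemma tmPoly_two : tmPoly 2 = 1 - X := by
  simp [tmPoly, Finset.sum_range_succ, thueMorse]
  ring

lemma tmPoly_double (n : ℕ) :
    tmPoly (2 * n) = (tmPoly n).comp (X ^ 2) * tmPoly 2 := by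
  induction n with
  | zero => simp [tmPoly]
  | succ k ih =>
    rw [show 2 * (k + 1) = (2 * k + 1) + 1 from by ring, tmPoly_succ,
      show 2 * k + 1 = (2 * k) + 1 from rfl, tmPoly_succ, ih, tmPoly_succ k,
      add_comp, mul_comp, C_comp, pow_comp, X_comp, tm_two_mul, tm_two_mul_add_one,
      tmPoly_two, map_neg]
    ring

theorem tmPoly_two_pow_mul (n s : ℕ) (hn : 1 ≤ n) :
    tmPoly (2 ^ s * n) = (tmPoly n).comp (Polynomial.X ^ (2 ^ s)) * tmPoly (2 ^ s) := by
  induction s with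
  | zero =>
    simp [tmPoly_succ, tmPoly, thueMorse]
  | succ s ih =>
    have h : 2 ^ (s + 1) * n = 2 * (2 ^ s * n) := by ring
    rw [h, tmPoly_double, ih, mul_comp, mul_assoc, ← tmPoly_double,
      show (2:ℕ) * 2 ^ s = 2 ^ (s + 1) from by ring]
    congr 1
    rw [comp_assoc, pow_comp, X_comp, ← pow_mul, show 2 * 2 ^ s = 2 ^ (s+1) from by ring]
end

section
/- Let r ≥ 1 be odd, ω ∈ ℂ an r-th root of unity, and s ≥ 1 an integer with 2^s ≡ 1 (mod r). Then for all integers n ≥ 1, T(2^s·n; ω) = T(2^s; ω)·T(n; ω). -/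
open Finset

/-- Evaluation of the Thue–Morse polynomial: `T(n; z) = ∑_{m=0}^{n-1} t(m) z^m ∈ ℂ`. -/
noncomputable def tmEval (n : ℕ) (z : ℂ) : ℂ :=
  ∑ m ∈ Finset.range n, (thueMorse m : ℂ) * z ^ m

lemma thueMorse_two_mul (n : ℕ) : thueMorse (2 * n) = thueMorse n := by
  rcases Nat.eq_zero_or_pos n with h | h
  · simp [h]
  · unfold thueMorse
    rw [Nat.digits_def' (by norm_num) (by omega)]
    simp [Nat.mul_div_cancel_left, Nat.mul_mod_right]

lemma thueMorse_two_mul_add_one (n : ℕ) : thueMorse (2 * n + 1) = - thueMorse n := by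
  unfold thueMorse
  rw [Nat.digits_def' (by norm_num) (by omega)]
  have h1 : (2 * n + 1) % 2 = 1 := by omega
  have h2 : (2 * n + 1) / 2 = n := by omega
  rw [h1, h2]
  simp [pow_succ, pow_add, mul_comm]

lemma thueMorse_mul_of_lt : ∀ (s q m : ℕ), m < 2 ^ s →
    thueMorse (2 ^ s * q + m) = thueMorse q * thueMorse m := by
  intro s
  induction s with
  | zero => intro q m hm; interval_cases m <;> simp [thueMorse]
  | succ s ih =>
    intro q m hm
    rcases Nat.even_or_odd m with ⟨m', rfl⟩ | ⟨m', rfl⟩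
    · have : 2 ^ (s + 1) * q + (m' + m') = 2 * (2 ^ s * q + m') := by ring
      rw [this, thueMorse_two_mul, ih q m' (by omega)]
      rw [show m' + m' = 2 * m' by ring, thueMorse_two_mul]
    · have : 2 ^ (s + 1) * q + (2 * m' + 1) = 2 * (2 ^ s * q + m') + 1 := by ring
      rw [this, thueMorse_two_mul_add_one, ih q m' (by omega),
        thueMorse_two_mul_add_one]
      ring

lemma pow_modEq {r : ℕ} (hr : 0 < r) {ω : ℂ} (hω : ω ^ r = 1) {a b : ℕ}
    (h : a ≡ b [MOD r]) : ω ^ a = ω ^ b := by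
  have key : ∀ c : ℕ, ω ^ c = ω ^ (c % r) := by
    intro c
    conv_lhs => rw [← Nat.div_add_mod c r]
    rw [pow_add, pow_mul, hω, one_pow, one_mul]
  rw [key a, key b, h]

theorem tmEval_two_pow_mul (r : ℕ) (hr : 1 ≤ r) (hodd : Odd r) (ω : ℂ) (hω : ω ^ r = 1)
    (s : ℕ) (hs : 1 ≤ s) (hmod : 2 ^ s ≡ 1 [MOD r]) :
    ∀ n : ℕ, 1 ≤ n → tmEval (2 ^ s * n) ω = tmEval (2 ^ s) ω * tmEval n ω := by
  have hωpow : ω ^ (2 ^ s) = ω := by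
    simpa using pow_modEq hr hω hmod
  suffices h : ∀ n : ℕ, tmEval (2 ^ s * n) ω = tmEval (2 ^ s) ω * tmEval n ω by
    intro n _; exact h n
  intro n
  induction n with
  | zero => simp [tmEval]
  | succ n ih =>
    have hsplit : 2 ^ s * (n + 1) = 2 ^ s * n + 2 ^ s := by ring
    rw [hsplit]
    unfold tmEval
    rw [Finset.sum_range_add]
    have hterm : ∀ m ∈ Finset.range (2 ^ s),
        (thueMorse (2 ^ s * n + m) : ℂ) * ω ^ (2 ^ s * n + m)
          = ((thueMorse m : ℂ) * ω ^ m) * ((thueMorse n : ℂ) * ω ^ n) := by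
      intro m hm
      rw [Finset.mem_range] at hm
      rw [thueMorse_mul_of_lt s n m hm, pow_add, pow_mul, hωpow]
      push_cast
      ring
    rw [Finset.sum_congr rfl hterm, ← Finset.sum_mul]
    have ih' : ∑ i ∈ Finset.range (2 ^ s * n), (thueMorse i : ℂ) * ω ^ i
        = tmEval (2 ^ s) ω * tmEval n ω := ih
    rw [ih']
    unfold tmEval
    rw [Finset.sum_range_succ]
    ring
end

section
/- Let p be an odd prime, α ≥ 1, r₀ = p^α, ω a primitive r₀-th root of unity, and s₀ the multiplicative order of 2 modulo r₀. If T(2^{s₀}; ω) = ∏_{i=0}^{s₀-1}(1 - ω^{2^i}) is a rational integer, then s₀ = φ(r₀). -/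
open Finset

theorem tmProd_int_imp_primitive_root (p : ℕ) (hp : p.Prime) (hpodd : Odd p) (α : ℕ)
    (hα : 1 ≤ α) (r₀ : ℕ) (hr₀ : r₀ = p ^ α) (ω : ℂ) (hω : IsPrimitiveRoot ω r₀)
    (s₀ : ℕ) (hs₀ : s₀ = orderOf (2 : ZMod r₀))
    (hint : ∃ z : ℤ, ∏ i ∈ Finset.range s₀, (1 - ω ^ (2 ^ i)) = (z : ℂ)) :
    s₀ = Nat.totient r₀ := by
  haveI : Fact p.Prime := ⟨hp⟩
  obtain ⟨β, rfl⟩ : ∃ β, α = β + 1 := ⟨α - 1, (Nat.succ_pred_eq_of_pos hα).symm⟩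
  subst hr₀ hs₀
  obtain ⟨z, hz⟩ := hint
  set n : ℕ := p ^ (β + 1) with hn
  have hnpos : 0 < n := pow_pos hp.pos _
  haveI : NeZero n := ⟨hnpos.ne'⟩
  set n' : ℕ+ := ⟨n, hnpos⟩ with hn'
  have hω' : IsPrimitiveRoot ω (n' : ℕ) := hω
  -- the unit 2
  have hcop2 : Nat.Coprime 2 n := by
    rw [Nat.prime_two.coprime_iff_not_dvd]
    simpa [Nat.odd_iff, even_iff_two_dvd, hn] using hpodd.pow (n := β + 1)
  let u : (ZMod n)ˣ := ZMod.unitOfCoprime 2 hcop2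
  have hu : (u : ZMod n) = 2 := by simp [u]
  have hs : orderOf (2 : ZMod n) = orderOf u := by rw [← hu, orderOf_units]
  set s : ℕ := orderOf (2 : ZMod n) with hsdef
  have hspos : 0 < s := by
    rw [hs]; exact orderOf_pos u
  have hsdvd : s ∣ Nat.totient n := by
    rw [hs, ← ZMod.card_units_eq_totient]
    exact orderOf_dvd_card
  -- the cyclotomic field
  set K0 := Algebra.adjoin ℚ ({ω} : Set ℂ) with hK0
  haveI : IsCyclotomicExtension {(n' : ℕ)} ℚ K0 := hω'.adjoin_isCyclotomicExtension ℚ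
  set ζ' : K0 := ⟨ω, Algebra.subset_adjoin rfl⟩ with hζ'def
  have hζ' : IsPrimitiveRoot ζ' n := by
    rwa [← IsPrimitiveRoot.coe_submonoidClass_iff (B := Subalgebra ℚ ℂ)]
  have hord : orderOf ζ' = n := hζ'.eq_orderOf.symm
  have hpow : ∀ a b : ℕ, (a : ZMod n) = (b : ZMod n) → ζ' ^ a = ζ' ^ b := by
    intro a b hab
    have h := (ZMod.natCast_eq_natCast_iff _ _ _).mp hab
    calc ζ' ^ a = ζ' ^ (a % orderOf ζ') := (pow_mod_orderOf ζ' a).symm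
      _ = ζ' ^ (b % orderOf ζ') := by rw [hord]; exact congrArg _ h
      _ = ζ' ^ b := pow_mod_orderOf ζ' b
  have hirr : Irreducible (Polynomial.cyclotomic (n' : ℕ) ℚ) :=
    Polynomial.cyclotomic.irreducible_rat hnpos
  -- existence of automorphisms
  have hexists : ∀ g : (ZMod n)ˣ, ∃ σ : K0 ≃ₐ[ℚ] K0,
      σ ζ' = ζ' ^ ((g : ZMod n)).val := by
    intro g
    let σ := (IsCyclotomicExtension.autEquivPow K0 hirr).symm g
    refine ⟨σ, ?_⟩
    set ζ := IsCyclotomicExtension.zeta n' ℚ K0 with hζdef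
    have hζ : IsPrimitiveRoot ζ (n' : ℕ) := IsCyclotomicExtension.zeta_spec n' ℚ K0
    have ht : hζ.autToPow ℚ σ = g := by
      have := (IsCyclotomicExtension.autEquivPow K0 hirr).apply_symm_apply g
      rwa [IsCyclotomicExtension.autEquivPow_apply] at this
    obtain ⟨k, -, hk⟩ := hζ.eq_pow_of_pow_eq_one (hζ'.pow_eq_one)
    have hspec := hζ.autToPow_spec ℚ σ
    rw [ht] at hspec
    calc σ ζ' = σ (ζ ^ k) := by rw [hk]
      _ = (σ ζ) ^ k := map_pow σ ζ k
      _ = (ζ ^ ((g : ZMod n)).val) ^ k := congrArg (· ^ k) hspec.symm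
      _ = (ζ ^ k) ^ ((g : ZMod n)).val := by rw [← pow_mul, ← pow_mul, mul_comm]
      _ = ζ' ^ ((g : ZMod n)).val := by rw [hk]
  -- P = z in K0
  set P : K0 := ∏ i ∈ Finset.range s, (1 - ζ' ^ (2 ^ i)) with hPdef
  have hPz : P = ((z : ℤ) : K0) := by
    apply Subtype.coe_injective
    push_cast [hPdef]
    exact hz
  -- each "coset" product equals z
  have hF : ∀ g : (ZMod n)ˣ,
      ∏ i ∈ Finset.range s, (1 - ζ' ^ ((g : ZMod n) * 2 ^ i).val) = ((z : ℤ) : K0) := by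
    intro g
    obtain ⟨σ, hσ⟩ := hexists g
    have h1 : σ P = ((z : ℤ) : K0) := by rw [hPz, map_intCast]
    rw [hPdef, map_prod] at h1
    rw [← h1]
    refine Finset.prod_congr rfl fun i _ => ?_
    rw [map_sub, map_one, map_pow, hσ, ← pow_mul]
    congr 1
    apply hpow
    push_cast [ZMod.natCast_val, ZMod.cast_id]
    ring
  -- the full product over all units is p
  have hnorm : ∏ g : (ZMod n)ˣ, (1 - ω ^ ((g : ZMod n)).val) = (p : ℂ) := by
    have hcyc := Polynomial.cyclotomic_eq_prod_X_sub_primitiveRoots hω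
    have heval := Polynomial.eval_one_cyclotomic_prime_pow (R := ℂ) β (p := p)
    rw [hcyc] at heval
    simp only [Polynomial.eval_prod, Polynomial.eval_sub, Polynomial.eval_X,
      Polynomial.eval_C] at heval
    rw [← heval]
    refine Finset.prod_nbij (fun g => ω ^ ((g : ZMod n)).val) ?_ ?_ ?_ ?_
    · intro g _
      exact (mem_primitiveRoots hnpos).mpr
        (hω.pow_of_coprime _ (ZMod.val_coe_unit_coprime g))
    · intro a _ b _ hab
      have h1 : ((a : ZMod n)).val = ((b : ZMod n)).val :=
        hω.pow_inj (ZMod.val_lt _) (ZMod.val_lt _) hab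
      have h2 : (a : ZMod n) = (b : ZMod n) := by
        have := congrArg (Nat.cast : ℕ → ZMod n) h1
        simpa [ZMod.natCast_val, ZMod.cast_id] using this
      exact Units.ext h2
    · intro μ hμmem
      have hμ : IsPrimitiveRoot μ n := (mem_primitiveRoots hnpos).mp hμmem
      obtain ⟨i, hi, rfl⟩ := hω.eq_pow_of_pow_eq_one hμ.pow_eq_one
      have hco : i.Coprime n := (hω.pow_iff_coprime hnpos i).mp hμ
      refine ⟨ZMod.unitOfCoprime i hco, by simp, ?_⟩
      have : ((ZMod.unitOfCoprime i hco : ZMod n)).val = i := by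
        simp [ZMod.val_natCast, Nat.mod_eq_of_lt hi]
      simp [this, Nat.mod_eq_of_lt hi]
    · intro g _
      rfl
  have hnormK : ∏ g : (ZMod n)ˣ, (1 - ζ' ^ ((g : ZMod n)).val) = ((p : ℕ) : K0) := by
    apply Subtype.coe_injective
    push_cast
    exact hnorm
  -- the key identity
  have key : (((z : ℤ) : K0)) ^ (Nat.totient n) = (((p : ℕ) : K0)) ^ s := by
    calc (((z : ℤ) : K0)) ^ (Nat.totient n)
        = ∏ _g : (ZMod n)ˣ, (((z : ℤ) : K0)) := by
          rw [Finset.prod_const, Finset.card_univ, ZMod.card_units_eq_totient]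
      _ = ∏ g : (ZMod n)ˣ, ∏ i ∈ Finset.range s, (1 - ζ' ^ ((g : ZMod n) * 2 ^ i).val) :=
          (Finset.prod_congr rfl fun g _ => (hF g).symm)
      _ = ∏ i ∈ Finset.range s, ∏ g : (ZMod n)ˣ, (1 - ζ' ^ ((g : ZMod n) * 2 ^ i).val) :=
          Finset.prod_comm
      _ = ∏ _i ∈ Finset.range s, ∏ g : (ZMod n)ˣ, (1 - ζ' ^ ((g : ZMod n)).val) := by
          refine Finset.prod_congr rfl fun i _ => ?_
          refine Fintype.prod_equiv (Equiv.mulRight (u ^ i)) _ _ fun g => ?_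
          simp [Units.val_mul, hu]
      _ = (((p : ℕ) : K0)) ^ s := by
          rw [Finset.prod_const, Finset.card_range, hnormK]
  have keyZ : z ^ (Nat.totient n) = (p : ℤ) ^ s := by
    have := congrArg (Subtype.val) key
    push_cast at this
    exact_mod_cast this
  have keyN : z.natAbs ^ (Nat.totient n) = p ^ s := by
    have := congrArg Int.natAbs keyZ
    simpa [Int.natAbs_pow] using this
  have htotpos : 0 < Nat.totient n := Nat.totient_pos.mpr hnpos
  have hdvd : z.natAbs ∣ p ^ s := by
    rw [← keyN]
    exact dvd_pow_self z.natAbs htotpos.ne'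
  obtain ⟨k, -, hzk⟩ := (Nat.dvd_prime_pow hp).mp hdvd
  rw [hzk, ← pow_mul] at keyN
  have hks : k * Nat.totient n = s := Nat.pow_right_injective hp.two_le keyN
  have hk0 : k ≠ 0 := by
    rintro rfl
    rw [zero_mul] at hks
    omega
  have hle : s ≤ Nat.totient n := Nat.le_of_dvd htotpos hsdvd
  have hge : Nat.totient n ≤ s := by
    calc Nat.totient n = 1 * Nat.totient n := (one_mul _).symm
      _ ≤ k * Nat.totient n := Nat.mul_le_mul_right _ (Nat.one_le_iff_ne_zero.mpr hk0)
      _ = s := hks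
  exact Nat.le_antisymm hle hge
end

section
/- Let p be an odd prime, α ≥ 1, r₀ = p^α, ω a primitive r₀-th root of unity, and s₀ the multiplicative order of 2 modulo r₀. If s₀ = φ(r₀)/2 is odd, then the set {T(2^{s₀}; ω), T(2^{s₀}; ω^{-1})} equals {i√p, -i√p}, where T(2^{s₀}; z) = ∏_{j=0}^{s₀-1}(1 - z^{2^j}). -/
open Finset

theorem tmProd_purely_imaginary (p : ℕ) (hp : p.Prime) (hpodd : Odd p) (α : ℕ)
    (hα : 1 ≤ α) (r₀ : ℕ) (hr₀ : r₀ = p ^ α) (ω : ℂ) (hω : IsPrimitiveRoot ω r₀)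
    (s₀ : ℕ) (hs₀ : s₀ = orderOf (2 : ZMod r₀))
    (hhalf : 2 * s₀ = Nat.totient r₀) (hsodd : Odd s₀) :
    ({∏ j ∈ Finset.range s₀, (1 - ω ^ (2 ^ j)),
      ∏ j ∈ Finset.range s₀, (1 - ω⁻¹ ^ (2 ^ j))} : Set ℂ) =
    {Complex.I * Real.sqrt p, -(Complex.I * Real.sqrt p)} := by
  haveI : Fact p.Prime := ⟨hp⟩
  have hp2 : 2 < p := lt_of_le_of_ne hp.two_le (fun h => by
    rw [← h] at hpodd; exact (by decide : ¬ Odd 2) hpodd)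
  have hr3 : 3 ≤ r₀ := by
    rw [hr₀]
    calc 3 ≤ p := hp2
    _ ≤ p ^ α := Nat.le_self_pow (by omega) p
  have hr0 : 0 < r₀ := by omega
  haveI : NeZero r₀ := ⟨by omega⟩
  haveI : Fact (2 < r₀) := ⟨by omega⟩
  have hcop : Nat.Coprime 2 r₀ := by
    rw [hr₀]; exact Nat.Coprime.pow_right α (Nat.coprime_two_left.mpr hpodd)
  set u : (ZMod r₀)ˣ := ZMod.unitOfCoprime 2 hcop with hu_def
  have hu : (u : ZMod r₀) = 2 := by
    rw [hu_def, ZMod.coe_unitOfCoprime]; norm_num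
  have hou : orderOf u = s₀ := by
    rw [hs₀, ← hu, orderOf_units]
  have hωmod : ∀ a : ℕ, ω ^ a = ω ^ (a % r₀) := by
    intro a
    conv_lhs => rw [← Nat.div_add_mod a r₀]
    rw [pow_add, pow_mul, hω.pow_eq_one, one_pow, one_mul]
  have hωpow : ∀ a b : ℕ, ((a : ZMod r₀) = (b : ZMod r₀)) → ω ^ a = ω ^ b := by
    intro a b h
    rw [hωmod a, hωmod b, (ZMod.natCast_eq_natCast_iff a b r₀).mp h]
  have hωne : ω ≠ 0 := hω.ne_zero (by omega)
  set A : ℂ := ∏ j ∈ Finset.range s₀, (1 - ω ^ (2 ^ j)) with hA_def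
  set B : ℂ := ∏ j ∈ Finset.range s₀, (1 - ω⁻¹ ^ (2 ^ j)) with hB_def
  -- Step 1 : B = -A
  have h2s : ((2 : ZMod r₀)) ^ s₀ = 1 := by rw [hs₀]; exact pow_orderOf_eq_one _
  have hsum : ((∑ j ∈ Finset.range s₀, 2 ^ j : ℕ) : ZMod r₀) = ((0 : ℕ) : ZMod r₀) := by
    push_cast
    have hg := geom_sum_mul (2 : ZMod r₀) s₀
    rw [h2s, sub_self, show (2 : ZMod r₀) - 1 = 1 by norm_num, mul_one] at hg
    simpa using hg
  have hωsum : ω ^ (∑ j ∈ Finset.range s₀, 2 ^ j) = 1 := by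
    rw [hωpow _ 0 hsum, pow_zero]
  have hBA : B = -A := by
    have hfac : ∀ k : ℕ, 1 - ω⁻¹ ^ k = -(ω⁻¹ ^ k) * (1 - ω ^ k) := by
      intro k
      have h1 : ω⁻¹ ^ k * ω ^ k = 1 := by
        rw [← mul_pow, inv_mul_cancel₀ hωne, one_pow]
      linear_combination -h1
    calc B = ∏ j ∈ Finset.range s₀, (-(ω⁻¹ ^ (2 ^ j)) * (1 - ω ^ (2 ^ j))) :=
        Finset.prod_congr rfl (fun j _ => hfac _)
    _ = (∏ j ∈ Finset.range s₀, -(ω⁻¹ ^ (2 ^ j))) * A := Finset.prod_mul_distrib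
    _ = -A := by
      have hh1 : ∏ j ∈ Finset.range s₀, -(ω⁻¹ ^ (2 ^ j)) =
          (-1 : ℂ) ^ s₀ * ∏ j ∈ Finset.range s₀, ω⁻¹ ^ (2 ^ j) := by
        calc ∏ j ∈ Finset.range s₀, -(ω⁻¹ ^ (2 ^ j))
            = ∏ j ∈ Finset.range s₀, ((-1 : ℂ) * ω⁻¹ ^ (2 ^ j)) :=
          Finset.prod_congr rfl (fun j _ => by ring)
        _ = (∏ _j ∈ Finset.range s₀, (-1 : ℂ)) * ∏ j ∈ Finset.range s₀, ω⁻¹ ^ (2 ^ j) :=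
          Finset.prod_mul_distrib
        _ = (-1 : ℂ) ^ s₀ * ∏ j ∈ Finset.range s₀, ω⁻¹ ^ (2 ^ j) := by
          rw [Finset.prod_const, Finset.card_range]
      rw [hh1, Finset.prod_pow_eq_pow_sum, inv_pow, hωsum, inv_one, mul_one,
        hsodd.neg_one_pow, neg_one_mul]
  -- Step 2 : product over all units equals p
  have hcard : Fintype.card (ZMod r₀)ˣ = 2 * s₀ := by
    rw [ZMod.card_units_eq_totient, ← hhalf]
  have hvalrec : ∀ x : ZMod r₀, ((x.val : ℕ) : ZMod r₀) = x := ZMod.natCast_zmod_val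
  have hkey : ∏ g : (ZMod r₀)ˣ, (1 - ω ^ ((g : ZMod r₀)).val) = (p : ℂ) := by
    have heval : ∏ μ ∈ primitiveRoots r₀ ℂ, (1 - μ) = (p : ℂ) := by
      have h1 : Polynomial.eval 1 (Polynomial.cyclotomic r₀ ℂ) = (p : ℂ) := by
        obtain ⟨β, rfl⟩ : ∃ β, α = β + 1 := ⟨α - 1, by omega⟩
        rw [hr₀]
        exact_mod_cast Polynomial.eval_one_cyclotomic_prime_pow β
      rw [Polynomial.cyclotomic_eq_prod_X_sub_primitiveRoots hω] at h1
      simpa [Polynomial.eval_prod] using h1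
    rw [← heval]
    refine Finset.prod_nbij (fun g => ω ^ ((g : ZMod r₀)).val) ?_ ?_ ?_ ?_
    · intro g _
      exact (mem_primitiveRoots hr0).mpr
        (hω.pow_of_coprime _ (ZMod.val_coe_unit_coprime g))
    · intro g1 _ g2 _ h
      simp only at h
      have hve : ((g1 : ZMod r₀)).val = ((g2 : ZMod r₀)).val :=
        hω.pow_inj (ZMod.val_lt _) (ZMod.val_lt _) h
      exact Units.ext (ZMod.val_injective r₀ hve)
    · intro μ hμ
      have hprim : IsPrimitiveRoot μ r₀ := (mem_primitiveRoots hr0).mp hμ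
      obtain ⟨i, hik, hieq⟩ := hω.eq_pow_of_pow_eq_one hprim.pow_eq_one
      have hicop : Nat.Coprime i r₀ := by
        rw [← hieq] at hprim
        exact (hω.pow_iff_coprime hr0 i).mp hprim
      refine ⟨ZMod.unitOfCoprime i hicop, by simp, ?_⟩
      have hv : ((ZMod.unitOfCoprime i hicop : ZMod r₀)).val = i := by
        rw [ZMod.coe_unitOfCoprime, ZMod.val_cast_of_lt hik]
      simp only [hv, hieq]
    · intro g _; rfl
  -- injectivity of (e, j) ↦ (-1)^e * u^j
  have hcop2s : Nat.gcd s₀ 2 = 1 := Nat.coprime_comm.mp (Nat.coprime_two_left.mpr hsodd)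
  have hinj : ∀ a₁ ∈ Finset.range 2 ×ˢ Finset.range s₀,
      ∀ a₂ ∈ Finset.range 2 ×ˢ Finset.range s₀,
      ((-1 : (ZMod r₀)ˣ) ^ a₁.1 * u ^ a₁.2 = (-1) ^ a₂.1 * u ^ a₂.2) → a₁ = a₂ := by
    rintro ⟨e1, j1⟩ h1 ⟨e2, j2⟩ h2 heq
    simp only [Finset.mem_product, Finset.mem_range] at h1 h2
    obtain ⟨he1, hj1⟩ := h1
    obtain ⟨he2, hj2⟩ := h2
    have hsq : u ^ (2 * j1) = u ^ (2 * j2) := by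
      have key : ∀ e j : ℕ, ((-1 : (ZMod r₀)ˣ) ^ e * u ^ j) * ((-1) ^ e * u ^ j)
          = u ^ (2 * j) := by
        intro e j
        have hne : ((-1 : (ZMod r₀)ˣ) ^ e) * ((-1) ^ e) = 1 := by
          rw [← mul_pow]; norm_num
        rw [mul_mul_mul_comm, hne, one_mul, ← pow_add, two_mul]
      have := congrArg (fun x => x * x) heq
      simpa only [key] using this
    have hmod : 2 * j1 ≡ 2 * j2 [MOD s₀] := by
      rw [← hou]; exact pow_eq_pow_iff_modEq.mp hsq
    have hj : j1 = j2 := by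
      have hmm := Nat.ModEq.cancel_left_of_coprime hcop2s hmod
      rwa [Nat.ModEq, Nat.mod_eq_of_lt hj1, Nat.mod_eq_of_lt hj2] at hmm
    subst hj
    have he : ((-1 : (ZMod r₀)ˣ)) ^ e1 = (-1) ^ e2 := mul_right_cancel heq
    have hne11 : ((-1 : (ZMod r₀)ˣ)) ≠ 1 := by
      intro hcon
      exact ZMod.neg_one_ne_one (by simpa using congrArg (Units.val) hcon)
    have he12 : e1 = e2 := by
      interval_cases e1 <;> interval_cases e2 <;>
        simp only [pow_zero, pow_one] at he <;>
        first
          | rfl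
          | exact absurd he.symm hne11
          | exact absurd he hne11
    rw [he12]
  -- split the product over units as A * B
  have hsplit : ∏ g : (ZMod r₀)ˣ, (1 - ω ^ ((g : ZMod r₀)).val) = A * B := by
    have hbij : ∏ q ∈ Finset.range 2 ×ˢ Finset.range s₀,
        (1 - ω ^ ((((-1 : (ZMod r₀)ˣ) ^ q.1 * u ^ q.2 : (ZMod r₀)ˣ) : ZMod r₀)).val)
        = ∏ g : (ZMod r₀)ˣ, (1 - ω ^ ((g : ZMod r₀)).val) := by
      refine Finset.prod_nbij (fun q => (-1) ^ q.1 * u ^ q.2)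
        (fun q _ => Finset.mem_univ _) ?_ ?_ (fun q _ => rfl)
      · intro a ha b hb hab
        exact hinj a (Finset.mem_coe.mp ha) b (Finset.mem_coe.mp hb) hab
      · intro b _
        have hle : (Finset.univ : Finset (ZMod r₀)ˣ).card ≤
            (Finset.range 2 ×ˢ Finset.range s₀).card := by
          rw [Finset.card_univ, hcard, Finset.card_product, Finset.card_range,
            Finset.card_range]
        obtain ⟨a, ha, hab⟩ := Finset.surj_on_of_inj_on_of_card_le
          (fun q _ => (-1 : (ZMod r₀)ˣ) ^ q.1 * u ^ q.2)
          (fun q _ => Finset.mem_univ _)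
          (fun a₁ a₂ ha₁ ha₂ h => hinj a₁ ha₁ a₂ ha₂ h) hle b (Finset.mem_univ b)
        exact ⟨a, ha, hab.symm⟩
    have hωu0 : ∀ j : ℕ, (1 : ℂ) -
        ω ^ ((((-1 : (ZMod r₀)ˣ) ^ 0 * u ^ j : (ZMod r₀)ˣ) : ZMod r₀)).val
        = 1 - ω ^ (2 ^ j) := by
      intro j
      congr 1
      apply hωpow
      rw [hvalrec]
      push_cast
      simp [Units.val_pow_eq_pow_val, hu]
    have hωu1 : ∀ j : ℕ, (1 : ℂ) -
        ω ^ ((((-1 : (ZMod r₀)ˣ) ^ 1 * u ^ j : (ZMod r₀)ˣ) : ZMod r₀)).val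
        = 1 - ω⁻¹ ^ (2 ^ j) := by
      intro j
      have hc : ((((-1 : (ZMod r₀)ˣ) ^ 1 * u ^ j : (ZMod r₀)ˣ) : ZMod r₀))
          = -((2 : ZMod r₀) ^ j) := by
        simp [Units.val_pow_eq_pow_val, hu]
      have hmul : ω ^ ((((-1 : (ZMod r₀)ˣ) ^ 1 * u ^ j : (ZMod r₀)ˣ) : ZMod r₀)).val
          * ω ^ (2 ^ j) = 1 := by
        rw [← pow_add, hωpow _ 0 ?_, pow_zero]
        rw [Nat.cast_add, hvalrec, hc]
        push_cast
        ring
      rw [eq_inv_of_mul_eq_one_left hmul, inv_pow]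
    rw [← hbij, Finset.prod_product]
    rw [show (2 : ℕ) = 1 + 1 from rfl, Finset.prod_range_succ, Finset.prod_range_one]
    rw [Finset.prod_congr rfl (fun j _ => hωu0 j), Finset.prod_congr rfl (fun j _ => hωu1 j)]
  -- conclude
  have hAB : A * B = (p : ℂ) := by rw [hsplit] at hkey; exact hkey
  have hA2 : A ^ 2 = -(p : ℂ) := by
    rw [hBA] at hAB
    linear_combination -hAB
  have hX2 : (Complex.I * (Real.sqrt p : ℂ)) ^ 2 = -(p : ℂ) := by
    have hsp : ((Real.sqrt p : ℝ) : ℂ) ^ 2 = (p : ℂ) := by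
      rw [← Complex.ofReal_pow, Real.sq_sqrt (Nat.cast_nonneg p)]
      simp
    rw [mul_pow, Complex.I_sq, hsp]
    ring
  have hfact : (A - Complex.I * (Real.sqrt p : ℂ)) * (A + Complex.I * (Real.sqrt p : ℂ)) = 0 := by
    linear_combination hA2 - hX2
  rcases mul_eq_zero.mp hfact with h | h
  · have hAX : A = Complex.I * (Real.sqrt p : ℂ) := sub_eq_zero.mp h
    rw [hBA, hAX]
  · have hAX : A = -(Complex.I * (Real.sqrt p : ℂ)) := eq_neg_of_add_eq_zero_left h
    rw [hBA, hAX, neg_neg, Set.pair_comm]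
end

section
/- Let r₀ > 1 be odd with at least two distinct prime factors, ω a primitive r₀-th root of unity, and s₀ the multiplicative order of 2 modulo r₀. If T(2^{s₀}; ω) = ∏_{i=0}^{s₀-1}(1 - ω^{2^i}) is a rational integer, then T(2^{s₀}; ω) ∈ {1, -1}. -/
open Finset

theorem tmProd_int_imp_unit (r₀ : ℕ) (hr₀ : 1 < r₀) (hodd : Odd r₀)
    (hfac : 2 ≤ r₀.primeFactors.card) (ω : ℂ) (hω : IsPrimitiveRoot ω r₀)
    (s₀ : ℕ) (hs₀ : s₀ = orderOf (2 : ZMod r₀))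
    (hint : ∃ z : ℤ, ∏ i ∈ Finset.range s₀, (1 - ω ^ (2 ^ i)) = (z : ℂ)) :
    ∏ i ∈ Finset.range s₀, (1 - ω ^ (2 ^ i)) = 1 ∨
      ∏ i ∈ Finset.range s₀, (1 - ω ^ (2 ^ i)) = -1 := by
  obtain ⟨z, hz⟩ := hint
  have hr0 : 0 < r₀ := by omega
  -- Φ_{r₀}(1) = 1 over ℂ
  have hcyc1 : ∏ ζ ∈ primitiveRoots r₀ ℂ, (1 - ζ) = 1 := by
    have h2 : Polynomial.eval 1 (Polynomial.cyclotomic r₀ ℂ) = 1 := by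
      apply Polynomial.eval_one_cyclotomic_not_prime_pow
      intro p hp k hpk
      have hk : k ≠ 0 := by rintro rfl; simp at hpk; omega
      rw [← hpk, Nat.primeFactors_prime_pow hk hp] at hfac
      simp at hfac
    rw [Polynomial.cyclotomic_eq_prod_X_sub_primitiveRoots hω] at h2
    simpa [Polynomial.eval_prod] using h2
  set f : ℕ → ℂ := fun i => ω ^ (2 ^ i) with hf
  have hω0 : ω ≠ 0 := hω.ne_zero hr0.ne'
  have hcop2 : Nat.Coprime 2 r₀ := hodd.coprime_two_left
  -- injectivity
  have key : ∀ i j : ℕ, i ≤ j → j < s₀ → f i = f j → i = j := by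
    intro i j hij hjs hfeq
    have hle : (2 : ℕ) ^ i ≤ 2 ^ j := Nat.pow_le_pow_right (by norm_num) hij
    have h1 : ω ^ (2 ^ j - 2 ^ i) = 1 := by
      have h : ω ^ (2 ^ i) * ω ^ (2 ^ j - 2 ^ i) = ω ^ (2 ^ i) * 1 := by
        rw [← pow_add, Nat.add_sub_cancel' hle, mul_one]; exact hfeq.symm
      exact mul_left_cancel₀ (pow_ne_zero _ hω0) h
    have hdvd : r₀ ∣ 2 ^ j - 2 ^ i := (hω.pow_eq_one_iff_dvd _).mp h1
    have heq : 2 ^ j - 2 ^ i = 2 ^ i * (2 ^ (j - i) - 1) := by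
      rw [Nat.mul_sub, mul_one, ← pow_add, Nat.add_sub_cancel' hij]
    have hdvd2 : r₀ ∣ 2 ^ (j - i) - 1 := by
      refine Nat.Coprime.dvd_of_dvd_mul_left ?_ (heq ▸ hdvd)
      exact (hcop2.pow_left i).symm
    have hz0 : ((2 ^ (j - i) - 1 : ℕ) : ZMod r₀) = 0 :=
      (ZMod.natCast_eq_zero_iff _ _).mpr hdvd2
    rw [Nat.cast_sub Nat.one_le_two_pow] at hz0
    push_cast at hz0
    have hpow : (2 : ZMod r₀) ^ (j - i) = 1 := by
      have := sub_eq_zero.mp hz0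
      simpa using this
    have hord : s₀ ∣ j - i := hs₀ ▸ orderOf_dvd_of_pow_eq_one hpow
    have : j - i = 0 := Nat.eq_zero_of_dvd_of_lt hord (by omega) |>.symm ▸ rfl
    omega
  have hinj : ∀ i ∈ Finset.range s₀, ∀ j ∈ Finset.range s₀, f i = f j → i = j := by
    intro i hi j hj hfeq
    simp only [Finset.mem_range] at hi hj
    rcases le_total i j with h | h
    · exact key i j h hj hfeq
    · exact (key j i h hi hfeq.symm).symm
  have himage : (Finset.range s₀).image f ⊆ primitiveRoots r₀ ℂ := by
    intro x hx
    simp only [Finset.mem_image] at hx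
    obtain ⟨i, _, rfl⟩ := hx
    rw [mem_primitiveRoots hr0]
    exact hω.pow_of_coprime _ (hcop2.pow_left i)
  have hsplit : (z : ℂ) *
      (∏ ζ ∈ primitiveRoots r₀ ℂ \ (Finset.range s₀).image f, (1 - ζ)) = 1 := by
    calc (z : ℂ) * ∏ ζ ∈ primitiveRoots r₀ ℂ \ (Finset.range s₀).image f, (1 - ζ)
        = (∏ x ∈ (Finset.range s₀).image f, (1 - x)) *
          ∏ ζ ∈ primitiveRoots r₀ ℂ \ (Finset.range s₀).image f, (1 - ζ) := by
          rw [Finset.prod_image hinj, show (∏ x ∈ Finset.range s₀, (1 - f x)) = (z : ℂ) from hz]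
      _ = ∏ ζ ∈ primitiveRoots r₀ ℂ, (1 - ζ) := by rw [mul_comm, Finset.prod_sdiff himage]
      _ = 1 := hcyc1
  set w : ℂ := ∏ ζ ∈ primitiveRoots r₀ ℂ \ (Finset.range s₀).image f, (1 - ζ) with hw
  have hwint : IsIntegral ℤ w := by
    apply IsIntegral.prod
    intro ζ hζ
    have hζmem : ζ ∈ primitiveRoots r₀ ℂ := (Finset.mem_sdiff.mp hζ).1
    have hζprim : IsPrimitiveRoot ζ r₀ := (mem_primitiveRoots hr0).mp hζmem
    have hζint : IsIntegral ℤ ζ := by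
      refine ⟨Polynomial.X ^ r₀ - 1, ?_, ?_⟩
      · simpa using Polynomial.monic_X_pow_sub_C (1 : ℤ) hr0.ne'
      · simp [hζprim.pow_eq_one]
    exact isIntegral_one.sub hζint
  have hz0 : z ≠ 0 := by
    rintro rfl
    simp at hsplit
  -- w is rational: w = (z : ℂ)⁻¹
  have hzc : (z : ℂ) ≠ 0 := Int.cast_ne_zero.mpr hz0
  have hwval : w = ((((z : ℚ)⁻¹ : ℚ)) : ℂ) := by
    have hwinv : w = (z : ℂ)⁻¹ := by
      field_simp
      linear_combination hsplit
    rw [hwinv]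
    push_cast
    ring
  have hqint : IsIntegral ℤ ((z : ℚ)⁻¹ : ℚ) := by
    rw [← isIntegral_algHom_iff (IsScalarTower.toAlgHom ℤ ℚ ℂ)
      (algebraMap ℚ ℂ).injective]
    have : (IsScalarTower.toAlgHom ℤ ℚ ℂ) ((z : ℚ)⁻¹ : ℚ) = w := by
      rw [hwval]; simp [IsScalarTower.toAlgHom]
    rw [this]
    exact hwint
  obtain ⟨y, hy⟩ := IsIntegrallyClosed.isIntegral_iff.mp hqint
  have hzy : z * y = 1 := by
    have : ((z * y : ℤ) : ℚ) = 1 := by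
      push_cast
      rw [show ((y : ℚ)) = (z : ℚ)⁻¹ from by exact_mod_cast hy]
      field_simp
    exact_mod_cast this
  have := Int.isUnit_iff.mp (IsUnit.of_mul_eq_one (a := z) y hzy)
  rcases this with h | h
  · left; rw [hz, h]; norm_num
  · right; rw [hz, h]; norm_num
end

section
/- Let r₀ > 1 be odd with at least two distinct prime factors, ω a primitive r₀-th root of unity, and s₀ the multiplicative order of 2 modulo r₀. If s₀ = φ(r₀)/2 and 2^{s₀/2} ≢ -1 (mod r₀), then T(2^{s₀}; ω) = ∏_{i=0}^{s₀-1}(1 - ω^{2^i}) ∈ {1, -1}. -/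
open Finset Polynomial

set_option maxHeartbeats 1000000 in
theorem tmProd_unit_of_half_totient (r₀ : ℕ) (hr₀ : 1 < r₀) (hodd : Odd r₀)
    (hfac : 2 ≤ r₀.primeFactors.card) (ω : ℂ) (hω : IsPrimitiveRoot ω r₀)
    (s₀ : ℕ) (hs₀ : s₀ = orderOf (2 : ZMod r₀))
    (hhalf : 2 * s₀ = Nat.totient r₀) (hne : (2 : ZMod r₀) ^ (s₀ / 2) ≠ -1) :
    ∏ i ∈ Finset.range s₀, (1 - ω ^ (2 ^ i)) = 1 ∨
      ∏ i ∈ Finset.range s₀, (1 - ω ^ (2 ^ i)) = -1 := by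
  have hr3 : 3 ≤ r₀ := by rcases hodd with ⟨k, rfl⟩; omega
  haveI : NeZero r₀ := ⟨by omega⟩
  have h2r : Nat.Coprime 2 r₀ := Nat.coprime_two_left.2 hodd
  let u2 : (ZMod r₀)ˣ := ZMod.unitOfCoprime 2 h2r
  have hu2 : (u2 : ZMod r₀) = 2 := by rw [ZMod.coe_unitOfCoprime]; norm_num
  have hordu : orderOf u2 = s₀ := by rw [hs₀, ← orderOf_units, hu2]
  have hs1 : 0 < s₀ := by
    by_contra h
    have := Nat.totient_pos.2 (by omega : 0 < r₀)
    omega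
  have hs2 : 2 ≤ s₀ := by
    by_contra h
    push_neg at h
    have hs01 : s₀ = 1 := by omega
    have h1 : u2 = 1 := orderOf_eq_one_iff.1 (by rw [hordu, hs01])
    have : (2 : ZMod r₀) = 1 := by rw [← hu2, h1, Units.val_one]
    have h2 : ((2 : ℕ) : ZMod r₀) = ((1 : ℕ) : ZMod r₀) := by push_cast; rw [this]
    rw [ZMod.natCast_eq_natCast_iff] at h2
    have h3 := (Nat.modEq_iff_dvd' (by omega)).1 h2.symm
    have := Nat.le_of_dvd (by omega) h3
    omega
  -- -1 not in zpowers u2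
  have hneg : (-1 : (ZMod r₀)ˣ) ∉ Subgroup.zpowers u2 := by
    intro hmem
    rw [mem_zpowers_iff_mem_range_orderOf, hordu] at hmem
    simp only [Finset.mem_image, Finset.mem_range] at hmem
    obtain ⟨i, hi, hpow⟩ := hmem
    have hsq : u2 ^ (2 * i) = 1 := by
      rw [two_mul, pow_add, hpow]; simp
    have hdvd : s₀ ∣ 2 * i := by rw [← hordu]; exact orderOf_dvd_of_pow_eq_one hsq
    rcases Nat.eq_zero_or_pos i with rfl | hipos
    · have : (-1 : (ZMod r₀)ˣ) = 1 := by rw [← hpow, pow_zero]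
      have h2 : ((-1 : (ZMod r₀)ˣ) : ZMod r₀) = 1 := by rw [this, Units.val_one]
      rw [Units.val_neg, Units.val_one] at h2
      have h3 : ((2 : ℕ) : ZMod r₀) = ((0 : ℕ) : ZMod r₀) := by
        push_cast
        linear_combination -h2
      rw [ZMod.natCast_eq_natCast_iff] at h3
      have h4 := (Nat.modEq_iff_dvd' (by omega)).1 h3.symm
      simp only [Nat.sub_zero] at h4
      have := Nat.le_of_dvd (by omega) h4
      omega
    · have h2i : 2 * i = s₀ := by
        rcases hdvd with ⟨c, hc⟩
        have hc2 : c < 2 := by nlinarith [hs1, hi, hipos]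
        have hc0 : 0 < c := by nlinarith [hs1, hi, hipos]
        have hc1 : c = 1 := by omega
        rw [hc1] at hc
        omega
      apply hne
      have : i = s₀ / 2 := by omega
      rw [← this, ← hu2, ← Units.val_pow_eq_pow_val, hpow, Units.val_neg, Units.val_one]
  classical
  set Hf : Finset (ZMod r₀)ˣ := (Finset.range s₀).image (u2 ^ ·) with hHf
  set Cf : Finset (ZMod r₀)ˣ := Hf.image (fun x => -x) with hCf
  have hmemH : ∀ x : (ZMod r₀)ˣ, x ∈ Hf ↔ x ∈ Subgroup.zpowers u2 := by
    intro x
    rw [mem_zpowers_iff_mem_range_orderOf, hordu, hHf]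
  have hmemC : ∀ x : (ZMod r₀)ˣ, x ∈ Cf ↔ -x ∈ Hf := by
    intro x
    simp only [hCf, Finset.mem_image]
    constructor
    · rintro ⟨y, hy, rfl⟩; simpa using hy
    · intro h; exact ⟨-x, h, by simp⟩
  have hdisj : Disjoint Hf Cf := by
    rw [Finset.disjoint_left]
    intro x hx hc
    rw [hmemC] at hc
    rw [hmemH] at hx hc
    apply hneg
    have : (-x) * x⁻¹ ∈ Subgroup.zpowers u2 := mul_mem hc (inv_mem hx)
    simpa using this
  have hinj : Set.InjOn (u2 ^ ·) (Set.Iio (orderOf u2)) := pow_injOn_Iio_orderOf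
  have hcardH : Hf.card = s₀ := by
    rw [hHf, Finset.card_image_of_injOn, Finset.card_range]
    intro a ha b hb hab
    exact hinj (by rw [hordu]; simpa using ha) (by rw [hordu]; simpa using hb) hab
  have hcardC : Cf.card = s₀ := by
    rw [hCf, Finset.card_image_of_injective _ neg_injective, hcardH]
  have huniv : Hf ∪ Cf = Finset.univ := by
    apply Finset.eq_univ_of_card
    rw [Finset.card_union_of_disjoint hdisj, hcardH, hcardC, ZMod.card_units_eq_totient]
    omega
  -- closure facts
  have hmulHH : ∀ a ∈ Hf, ∀ u ∈ Hf, a * u ∈ Hf := by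
    intro a ha u hu
    rw [hmemH] at *
    exact mul_mem ha hu
  have hmulHC : ∀ a ∈ Hf, ∀ u ∈ Cf, a * u ∈ Cf := by
    intro a ha u hu
    rw [hmemC] at *
    have := hmulHH a ha _ hu
    simpa using this
  have hmulCH : ∀ a ∈ Cf, ∀ u ∈ Hf, a * u ∈ Cf := by
    intro a ha u hu
    rw [hmemC] at *
    have : (-a) * u ∈ Hf := hmulHH _ ha _ hu
    simpa using this
  have hmulCC : ∀ a ∈ Cf, ∀ u ∈ Cf, a * u ∈ Hf := by
    intro a ha u hu
    rw [hmemC] at ha hu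
    have : (-a) * (-u) ∈ Hf := hmulHH _ ha _ hu
    simpa using this
  have himg : ∀ (a : (ZMod r₀)ˣ) (A B : Finset (ZMod r₀)ˣ), A.card = B.card →
      (∀ u ∈ A, a * u ∈ B) → A.image (a * ·) = B := by
    intro a A B hcard hsub
    apply Finset.eq_of_subset_of_card_le
    · intro x hx
      simp only [Finset.mem_image] at hx
      obtain ⟨u, hu, rfl⟩ := hx
      exact hsub u hu
    · rw [Finset.card_image_of_injective _ (mul_right_injective a), hcard]
  -- ===================== K side =====================
  let n : ℕ+ := ⟨r₀, by omega⟩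
  set K := CyclotomicField n ℚ with hK
  haveI : IsCyclotomicExtension {((n : ℕ+) : ℕ)} ℚ K := by
    exact CyclotomicField.isCyclotomicExtension _ _
  haveI : IsCyclotomicExtension {r₀} ℚ K := this
  set ζ := IsCyclotomicExtension.zeta n ℚ K with hζdef
  have hζ : IsPrimitiveRoot ζ r₀ := IsCyclotomicExtension.zeta_spec n ℚ K
  have hζn : IsPrimitiveRoot ζ ((n : ℕ+) : ℕ) := hζ
  have hirr : Irreducible (cyclotomic r₀ ℚ) := cyclotomic.irreducible_rat (by omega)
  have hirrn : Irreducible (cyclotomic ((n : ℕ+) : ℕ) ℚ) := hirr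
  have hζord : orderOf ζ = r₀ := hζ.eq_orderOf.symm
  have hzpow : ∀ m : ℕ, ζ ^ m = ζ ^ ((m : ZMod r₀)).val := by
    intro m
    conv_lhs => rw [← pow_mod_orderOf ζ m]
    rw [hζord, ZMod.val_natCast]
  set g : (ZMod r₀)ˣ → K := fun u => 1 - ζ ^ ((u : ZMod r₀)).val with hg
  set PK := ∏ u ∈ Hf, g u with hPK
  set QK := ∏ u ∈ Cf, g u with hQK
  have hPQ : PK * QK = 1 := by
    rw [hPK, hQK, ← Finset.prod_union hdisj, huniv]
    have h1 : ∏ u : (ZMod r₀)ˣ, g u = ∏ μ ∈ primitiveRoots r₀ K, (1 - μ) := by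
      refine Finset.prod_bij (i := fun (u : (ZMod r₀)ˣ) (_ : u ∈ Finset.univ) => ζ ^ ((u : ZMod r₀)).val) ?_ ?_ ?_ ?_
      · intro u _
        rw [mem_primitiveRoots (show 0 < r₀ by omega)]
        exact hζ.pow_of_coprime _ (ZMod.val_coe_unit_coprime u)
      · intro a _ b _ hab
        have hv := hζ.pow_inj (ZMod.val_lt _) (ZMod.val_lt _) hab
        apply Units.ext
        rw [← ZMod.natCast_zmod_val ((a : (ZMod r₀)ˣ) : ZMod r₀), hv, ZMod.natCast_zmod_val]
      · intro μ hμ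
        rw [mem_primitiveRoots (show 0 < r₀ by omega)] at hμ
        obtain ⟨i, hi, hpow⟩ := hζ.eq_pow_of_pow_eq_one hμ.pow_eq_one
        have hco : i.Coprime r₀ := (hζ.pow_iff_coprime (by omega) i).1 (hpow ▸ hμ)
        refine ⟨ZMod.unitOfCoprime i hco, Finset.mem_univ _, ?_⟩
        have hval : ((ZMod.unitOfCoprime i hco : (ZMod r₀)ˣ) : ZMod r₀).val = i := by
          rw [ZMod.coe_unitOfCoprime, ZMod.val_natCast, Nat.mod_eq_of_lt hi]
        show ζ ^ ((ZMod.unitOfCoprime i hco : (ZMod r₀)ˣ) : ZMod r₀).val = μ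
        rw [hval]
        exact hpow
      · intro u _
        rfl
    rw [h1]
    have h3 : Polynomial.eval 1 (cyclotomic r₀ K) = ∏ μ ∈ primitiveRoots r₀ K, (1 - μ) := by
      rw [cyclotomic_eq_prod_X_sub_primitiveRoots hζ, Polynomial.eval_prod]
      simp
    rw [← h3]
    apply Polynomial.eval_one_cyclotomic_not_prime_pow
    intro p hp k hpk
    rcases Nat.eq_zero_or_pos k with rfl | hk
    · rw [pow_zero] at hpk; omega
    · rw [← hpk, Nat.primeFactors_prime_pow hk.ne' hp] at hfac
      simp at hfac
  -- sigma action
  have hgmul : ∀ (σ : K ≃ₐ[ℚ] K) (a : (ZMod r₀)ˣ), σ ζ = ζ ^ ((a : ZMod r₀)).val →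
      ∀ u, σ (g u) = g (a * u) := by
    intro σ a ha u
    show σ (1 - ζ ^ _) = 1 - ζ ^ _
    rw [map_sub, map_one, map_pow, ha, ← pow_mul,
      hzpow (((a : ZMod r₀)).val * ((u : ZMod r₀)).val)]
    have hcast : ((((a : ZMod r₀)).val * ((u : ZMod r₀)).val : ℕ) : ZMod r₀)
        = ((a * u : (ZMod r₀)ˣ) : ZMod r₀) := by
      push_cast [ZMod.natCast_zmod_val]
      rfl
    rw [hcast]
  have hsig : ∀ (σ : K ≃ₐ[ℚ] K) (a : (ZMod r₀)ˣ) (A B : Finset (ZMod r₀)ˣ), A.card = B.card →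
      (∀ u ∈ A, a * u ∈ B) → σ ζ = ζ ^ ((a : ZMod r₀)).val →
      σ (∏ u ∈ A, g u) = ∏ u ∈ B, g u := by
    intro σ a A B hcard hcl ha
    rw [map_prod, ← himg a A B hcard hcl,
      Finset.prod_image (fun x _ y _ h => mul_left_cancel h)]
    exact Finset.prod_congr rfl fun u _ => hgmul σ a ha u
  have hfixt : ∀ σ : K ≃ₐ[ℚ] K, σ (PK + QK) = PK + QK := by
    intro σ
    have ha : σ ζ = ζ ^ (((hζ.autToPow ℚ σ : (ZMod r₀)ˣ) : ZMod r₀)).val :=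
      (hζ.autToPow_spec ℚ σ).symm
    set a : (ZMod r₀)ˣ := hζ.autToPow ℚ σ with hadef
    have hmema : a ∈ Hf ∪ Cf := by rw [huniv]; exact Finset.mem_univ a
    rw [map_add]
    rcases Finset.mem_union.1 hmema with hA | hA
    · rw [hsig σ a Hf Hf rfl (hmulHH a hA) ha, hsig σ a Cf Cf rfl (hmulHC a hA) ha]
    · rw [hsig σ a Hf Cf (hcardH.trans hcardC.symm) (hmulCH a hA) ha,
        hsig σ a Cf Hf (hcardC.trans hcardH.symm) (hmulCC a hA) ha]
      ring
  -- rationality of PK + QK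
  haveI hgal : IsGalois ℚ K := IsCyclotomicExtension.isGalois {(n : ℕ)} ℚ K
  have hbot : PK + QK ∈ (⊥ : IntermediateField ℚ K) := by
    have hfixsub : IntermediateField.fixingSubgroup (⊥ : IntermediateField ℚ K) = ⊤ := by
      apply top_le_iff.1
      intro σ _
      rw [IntermediateField.mem_fixingSubgroup_iff]
      intro x hx
      rw [IntermediateField.mem_bot] at hx
      obtain ⟨q, rfl⟩ := hx
      exact σ.commutes q
    haveI : FiniteDimensional ℚ K := IsCyclotomicExtension.finiteDimensional {(n : ℕ)} ℚ K
    have hff := IsGalois.fixedField_fixingSubgroup (⊥ : IntermediateField ℚ K)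
    rw [hfixsub] at hff
    rw [← hff]
    exact fun σ => hfixt σ
  rw [IntermediateField.mem_bot] at hbot
  obtain ⟨q, hq⟩ := hbot
  -- integrality
  have hζint : IsIntegral ℤ ζ := by
    refine ⟨X ^ r₀ - C 1, monic_X_pow_sub_C 1 (by omega), ?_⟩
    simp [hζ.pow_eq_one]
  have hprodint : ∀ A : Finset (ZMod r₀)ˣ, IsIntegral ℤ (∏ u ∈ A, g u) := by
    intro A
    refine Finset.prod_induction g (IsIntegral ℤ) (fun a b ha hb => ha.mul hb)
      isIntegral_one (fun u _ => isIntegral_one.sub (hζint.pow _))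
  have hqint : IsIntegral ℤ q := by
    rw [← isIntegral_algebraMap_iff (algebraMap ℚ K).injective, hq]
    exact (hprodint Hf).add (hprodint Cf)
  obtain ⟨z, hz⟩ := IsIntegrallyClosed.isIntegral_iff.1 hqint
  -- embedding into ℂ
  have hprω : ω ∈ primitiveRoots r₀ ℂ := (mem_primitiveRoots (show 0 < r₀ by omega)).2 hω
  set φ : K →ₐ[ℚ] ℂ := (hζn.embeddingsEquivPrimitiveRoots ℂ hirrn).symm ⟨ω, hprω⟩ with hφdef
  have hφζ : φ ζ = ω := by
    have h := hζn.embeddingsEquivPrimitiveRoots_apply_coe ℂ hirrn φ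
    rw [hφdef, Equiv.apply_symm_apply] at h
    rw [hφdef]
    exact h.symm
  have hφinj : Function.Injective φ := φ.toRingHom.injective
  have hωord : orderOf ω = r₀ := hω.eq_orderOf.symm
  have hωpow : ∀ m : ℕ, ω ^ ((m : ZMod r₀)).val = ω ^ m := by
    intro m
    conv_rhs => rw [← pow_mod_orderOf ω m]
    rw [hωord, ZMod.val_natCast]
  have hval2 : ∀ i : ℕ, ((u2 ^ i : (ZMod r₀)ˣ) : ZMod r₀) = ((2 ^ i : ℕ) : ZMod r₀) := by
    intro i
    push_cast [hu2]
    rfl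
  have hinjH : ∀ x ∈ Finset.range s₀, ∀ y ∈ Finset.range s₀, u2 ^ x = u2 ^ y → x = y := by
    intro x hx y hy h
    exact hinj (by rw [hordu]; simpa using hx) (by rw [hordu]; simpa using hy) h
  have hφP : φ PK = ∏ i ∈ Finset.range s₀, (1 - ω ^ (2 ^ i)) := by
    rw [hPK, map_prod, hHf, Finset.prod_image hinjH]
    apply Finset.prod_congr rfl
    intro i _
    show φ (1 - ζ ^ _) = _
    rw [map_sub, map_one, map_pow, hφζ, hval2 i, hωpow]
  -- conjugation
  have hnorm : ‖ω‖ = 1 := Complex.norm_eq_one_of_pow_eq_one hω.pow_eq_one (by omega)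
  have hconj : (starRingEnd ℂ) ω = ω⁻¹ := (Complex.inv_eq_conj hnorm).symm
  -- conjugate computation
  set Pc : ℂ := ∏ i ∈ Finset.range s₀, (1 - ω ^ (2 ^ i)) with hPc
  have hinvpow : ∀ x : (ZMod r₀)ˣ,
      ω ^ (((-x : (ZMod r₀)ˣ) : ZMod r₀)).val = (ω ^ (((x : (ZMod r₀)ˣ) : ZMod r₀)).val)⁻¹ := by
    intro x
    have h0 : (((((-x : (ZMod r₀)ˣ) : ZMod r₀)).val + (((x : (ZMod r₀)ˣ) : ZMod r₀)).val : ℕ)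
        : ZMod r₀) = 0 := by
      rw [Nat.cast_add, ZMod.natCast_zmod_val, ZMod.natCast_zmod_val, Units.val_neg,
        neg_add_cancel]
    have hsum : ω ^ ((((-x : (ZMod r₀)ˣ) : ZMod r₀)).val + (((x : (ZMod r₀)ˣ) : ZMod r₀)).val)
        = 1 := by
      rw [← hωpow, h0, ZMod.val_zero, pow_zero]
    rw [pow_add] at hsum
    exact eq_inv_of_mul_eq_one_left hsum
  have hφQ : φ QK = (starRingEnd ℂ) Pc := by
    rw [hQK, hCf, Finset.prod_image (fun x _ y _ h => neg_injective h), hHf,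
      Finset.prod_image hinjH, map_prod, hPc, map_prod]
    apply Finset.prod_congr rfl
    intro i _
    show φ (1 - ζ ^ _) = _
    rw [map_sub, map_one, map_pow, hφζ, hinvpow (u2 ^ i), hval2 i, hωpow,
      map_sub, map_one, map_pow, hconj, inv_pow]
  -- basic complex facts
  have hPconj : Pc * (starRingEnd ℂ) Pc = 1 := by
    rw [← hφQ, ← hφP, ← map_mul, hPQ, map_one]
  have htz : Pc + (starRingEnd ℂ) Pc = ((z : ℤ) : ℂ) := by
    rw [← hφQ, ← hφP, ← map_add, ← hq, AlgHom.commutes, ← hz,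
      eq_ratCast (algebraMap ℚ ℂ), eq_intCast (algebraMap ℤ ℚ)]
    push_cast
    ring
  have habsP : ‖Pc‖ = 1 := by
    have h1 : ((Complex.normSq Pc : ℝ) : ℂ) = 1 := by rw [← Complex.mul_conj, hPconj]
    have h2 : Complex.normSq Pc = 1 := by exact_mod_cast h1
    have h3 : ‖Pc‖ ^ 2 = 1 := by rw [Complex.sq_norm, h2]
    nlinarith [norm_nonneg Pc]
  have hre : 2 * Pc.re = (z : ℝ) := by
    have h1 := Complex.add_conj Pc
    rw [htz] at h1
    exact_mod_cast h1.symm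
  have hz2 : -2 ≤ z ∧ z ≤ 2 := by
    have h1 : |Pc.re| ≤ 1 := by
      have := Complex.abs_re_le_norm Pc
      rw [habsP] at this
      exact this
    have h2 : |(z : ℝ)| ≤ 2 := by
      rw [← hre, abs_mul]
      rw [abs_of_pos (by norm_num : (0:ℝ) < 2)]
      linarith
    rw [abs_le] at h2
    constructor
    · exact_mod_cast h2.1
    · exact_mod_cast h2.2
  -- quadratic relation
  have hquad : Pc ^ 2 + 1 = ((z : ℤ) : ℂ) * Pc := by
    linear_combination Pc * htz - hPconj
  -- the automorphism sending ζ to ζ^2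
  have hmemu2H : u2 ∈ Hf := (hmemH u2).2 (Subgroup.mem_zpowers u2)
  have hvalu2 : ((u2 : ZMod r₀)).val = 2 := by
    rw [hu2, show (2 : ZMod r₀) = ((2 : ℕ) : ZMod r₀) by push_cast; rfl, ZMod.val_natCast,
      Nat.mod_eq_of_lt (by omega)]
  set σ₂ : K ≃ₐ[ℚ] K := IsCyclotomicExtension.fromZetaAut (hζn.pow_of_coprime 2 h2r) hirrn
    with hσ₂def
  have hσ₂ζ : σ₂ ζ = ζ ^ ((u2 : ZMod r₀)).val := by
    rw [hvalu2]
    exact IsCyclotomicExtension.fromZetaAut_spec (hζn.pow_of_coprime 2 h2r) hirrn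
  have hfixP : σ₂ PK = PK := hsig σ₂ u2 Hf Hf rfl (hmulHH u2 hmemu2H) hσ₂ζ
  -- degree contradiction
  haveI : FiniteDimensional ℚ K := IsCyclotomicExtension.finiteDimensional {(n : ℕ)} ℚ K
  have hfinrank : Module.finrank ℚ K = Nat.totient r₀ := IsCyclotomicExtension.finrank K hirrn
  have degContr : ∀ (m : ℕ) (x : K), 2 ≤ Nat.totient m → Nat.Coprime m r₀ → orderOf x = m →
      False := by
    intro m x hm hcop hx
    have hm0 : m ≠ 0 := by
      intro h
      rw [h] at hm
      simp [Nat.totient_zero] at hm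
    have hxord : orderOf (x * ζ) = m * r₀ := by
      have h := (Commute.all x ζ).orderOf_mul_eq_mul_orderOf_of_coprime
        (by rw [hx, hζord]; exact hcop)
      rw [hx, hζord] at h
      exact h
    have hprim : IsPrimitiveRoot (x * ζ) (m * r₀) := hxord ▸ IsPrimitiveRoot.orderOf (x * ζ)
    have hmin : cyclotomic (m * r₀) ℚ = minpoly ℚ (x * ζ) :=
      cyclotomic_eq_minpoly_rat hprim (Nat.mul_pos (Nat.pos_of_ne_zero hm0) (by omega))
    have hdeg : (minpoly ℚ (x * ζ)).natDegree ≤ Module.finrank ℚ K := minpoly.natDegree_le (x * ζ)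
    rw [← hmin, natDegree_cyclotomic, hfinrank, Nat.totient_mul hcop] at hdeg
    have h2 : 2 * Nat.totient r₀ ≤ Nat.totient m * Nat.totient r₀ :=
      Nat.mul_le_mul_right _ hm
    have h3 : 0 < Nat.totient r₀ := Nat.totient_pos.2 (by omega)
    have h4 := le_trans h2 hdeg
    omega
  -- elements of order 3 fixed by σ₂ cannot exist
  have cubicContr : ∀ yK : K, yK ^ 3 = 1 → yK ≠ 1 → σ₂ yK = yK → False := by
    intro yK hy3 hy1 hfixy
    by_cases h3r : (3 : ℕ) ∣ r₀
    · set ξ : K := ζ ^ (r₀ / 3) with hξdef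
      have hr33 : r₀ / 3 * 3 = r₀ := Nat.div_mul_cancel h3r
      have hξ3 : ξ ^ 3 = 1 := by rw [hξdef, ← pow_mul, hr33, hζ.pow_eq_one]
      have hξ1 : ξ ≠ 1 := hζ.pow_ne_one_of_pos_of_lt (by omega) (by omega)
      have hξ0 : ξ ≠ 0 := by
        intro h
        rw [h] at hξ3
        norm_num at hξ3
      have hξsum : ξ ^ 2 + ξ + 1 = 0 := by
        have hfc : (ξ - 1) * (ξ ^ 2 + ξ + 1) = 0 := by linear_combination hξ3
        rcases mul_eq_zero.1 hfc with h | h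
        · exact absurd (by linear_combination h) hξ1
        · exact h
      have hysum : yK ^ 2 + yK + 1 = 0 := by
        have hfc : (yK - 1) * (yK ^ 2 + yK + 1) = 0 := by linear_combination hy3
        rcases mul_eq_zero.1 hfc with h | h
        · exact absurd (by linear_combination h) hy1
        · exact h
      have hσξ : σ₂ ξ = ξ ^ 2 := by
        rw [hξdef, map_pow, hσ₂ζ, hvalu2, ← pow_mul, ← pow_mul, Nat.mul_comm]
      have hcontra : ξ = ξ ^ 2 → False := by
        intro h
        have h5 : ξ * (ξ - 1) = 0 := by linear_combination -h
        rcases mul_eq_zero.1 h5 with h' | h'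
        · exact hξ0 h'
        · exact hξ1 (by linear_combination h')
      have hycase : (yK - ξ) * (yK - ξ ^ 2) = 0 := by
        linear_combination hysum - yK * hξsum + hξ3
      rcases mul_eq_zero.1 hycase with h | h
      · have hyξ : yK = ξ := by linear_combination h
        rw [hyξ, hσξ] at hfixy
        exact hcontra hfixy.symm
      · have hyξ : yK = ξ ^ 2 := by linear_combination h
        rw [hyξ, map_pow, hσξ] at hfixy
        apply hcontra
        linear_combination hfixy - ξ * hξ3
    · haveI : Fact (Nat.Prime 3) := ⟨by norm_num⟩
      have hcop3 : Nat.Coprime 3 r₀ := (Nat.Prime.coprime_iff_not_dvd (by norm_num)).2 h3r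
      exact degContr 3 yK (by decide) hcop3 (orderOf_eq_prime hy3 hy1)
  -- final case analysis on z
  obtain ⟨hzl, hzr⟩ := hz2
  have hne1K : (-1 : K) ≠ 1 := by
    intro h
    have h2 := congrArg φ h
    rw [map_neg, map_one] at h2
    norm_num at h2
  interval_cases z
  · -- z = -2
    right
    push_cast at hquad
    have h0 : (Pc + 1) ^ 2 = 0 := by linear_combination hquad
    have h1 := (pow_eq_zero_iff (n := 2) (by norm_num)).1 h0
    linear_combination h1
  · -- z = -1
    exfalso
    push_cast at hquad
    have hy3 : PK ^ 3 = 1 := by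
      apply hφinj
      rw [map_pow, hφP, map_one]
      linear_combination (Pc - 1) * hquad
    have hy1 : PK ≠ 1 := by
      intro h
      have h2 := congrArg φ h
      rw [hφP, map_one] at h2
      rw [h2] at hquad
      norm_num at hquad
    exact cubicContr PK hy3 hy1 hfixP
  · -- z = 0
    exfalso
    push_cast at hquad
    have hPK2 : PK ^ 2 = -1 := by
      apply hφinj
      rw [map_pow, hφP, map_neg, map_one]
      linear_combination hquad
    have h4 : PK ^ (2 : ℕ) ^ 2 = 1 := by
      have : ((2 : ℕ) ^ 2 : ℕ) = 2 * 2 := by norm_num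
      rw [this, pow_mul, hPK2]
      ring
    have h2' : ¬PK ^ (2 : ℕ) ^ 1 = 1 := by
      rw [pow_one, hPK2]
      exact fun h => hne1K h
    have hord4 : orderOf PK = 4 := orderOf_eq_prime_pow h2' h4
    have hcop4 : Nat.Coprime 4 r₀ := by
      have h := Nat.Coprime.pow_left 2 h2r
      norm_num at h
      exact h
    exact degContr 4 PK (by decide) hcop4 hord4
  · -- z = 1
    exfalso
    push_cast at hquad
    have hz1 : Pc ^ 3 = -1 := by linear_combination (Pc + 1) * hquad
    have hy3 : (PK ^ 2) ^ 3 = 1 := by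
      apply hφinj
      rw [map_pow, map_pow, hφP, map_one]
      linear_combination (Pc ^ 3 - 1) * hz1
    have hy1 : PK ^ 2 ≠ 1 := by
      intro h
      have h2 := congrArg φ h
      rw [map_pow, hφP, map_one] at h2
      have hPc2 : Pc = 2 := by linear_combination h2 - hquad
      rw [hPc2] at h2
      norm_num at h2
    have hfixy : σ₂ (PK ^ 2) = PK ^ 2 := by rw [map_pow, hfixP]
    exact cubicContr (PK ^ 2) hy3 hy1 hfixy
  · -- z = 2
    left
    push_cast at hquad
    have h0 : (Pc - 1) ^ 2 = 0 := by linear_combination hquad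
    have h1 := (pow_eq_zero_iff (n := 2) (by norm_num)).1 h0
    linear_combination h1
end

section
/- Let r₀ > 1 be odd with at least two distinct prime factors, ω a primitive r₀-th root of unity, and s₀ the multiplicative order of 2 modulo r₀. If s₀ is even and 2^{s₀/2} ≡ -1 (mod r₀), then T(2^{s₀}; ω) = ∏_{i=0}^{s₀-1}(1 - ω^{2^i}) is a real number that is not a rational integer. -/
open Finset IntermediateField

theorem tmProd_real_not_int (r₀ : ℕ) (hr₀ : 1 < r₀) (hodd : Odd r₀)
    (hfac : 2 ≤ r₀.primeFactors.card) (ω : ℂ) (hω : IsPrimitiveRoot ω r₀)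
    (s₀ : ℕ) (hs₀ : s₀ = orderOf (2 : ZMod r₀))
    (heven : Even s₀) (hneg : (2 : ZMod r₀) ^ (s₀ / 2) = -1) :
    (∏ i ∈ Finset.range s₀, (1 - ω ^ (2 ^ i))).im = 0 ∧
      ¬∃ z : ℤ, ∏ i ∈ Finset.range s₀, (1 - ω ^ (2 ^ i)) = (z : ℂ) := by
  have hrpos : 0 < r₀ := by omega
  haveI : NeZero r₀ := ⟨by omega⟩
  have hr3 : 3 ≤ r₀ := by
    rcases hodd with ⟨k, hk⟩; omega
  -- 1 ≠ -1 in ZMod r₀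
  have hne : (1 : ZMod r₀) ≠ -1 := by
    intro h
    have h2 : ((2 : ℕ) : ZMod r₀) = 0 := by
      push_cast
      linear_combination h
    have := Nat.le_of_dvd (by norm_num) ((ZMod.natCast_eq_zero_iff 2 r₀).mp h2)
    omega
  set t := s₀ / 2 with ht
  have htpos : 0 < t := by
    rcases Nat.eq_zero_or_pos t with h0 | h
    · rw [h0, pow_zero] at hneg; exact absurd hneg hne
    · exact h
  have hst : s₀ = t + t := by
    rcases heven with ⟨k, hk⟩; omega
  -- basic coprimality
  have hcop2 : Nat.Coprime 2 r₀ := Nat.coprime_two_left.mpr hodd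
  have hωne : ω ≠ 0 := fun h => by
    have := hω.pow_eq_one; rw [h] at this; simp [hrpos.ne'] at this
  -- congruence transfer
  have hωpow : ∀ a : ℕ, ((a : ZMod r₀) = 0) → ω ^ a = 1 := fun a ha =>
    (hω.pow_eq_one_iff_dvd a).mpr ((ZMod.natCast_eq_zero_iff a r₀).mp ha)
  have hkey : ∀ i : ℕ, ω ^ 2 ^ (t + i) * ω ^ 2 ^ i = 1 := by
    intro i
    rw [← pow_add]
    apply hωpow
    push_cast
    rw [pow_add, hneg]
    ring
  set Q : ℂ := ∏ i ∈ Finset.range t, (1 - ω ^ 2 ^ i) with hQ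
  set Q' : ℂ := ∏ i ∈ Finset.range t, (1 - ω ^ 2 ^ (t + i)) with hQ'
  have hPQQ' : ∏ i ∈ Finset.range s₀, (1 - ω ^ 2 ^ i) = Q * Q' := by
    rw [hst, Finset.prod_range_add]
  -- Q' is conj Q
  have habs : ‖ω‖ = 1 := Complex.norm_eq_one_of_pow_eq_one hω.pow_eq_one hrpos.ne'
  have hωconj : ω * (starRingEnd ℂ) ω = 1 := by
    rw [Complex.mul_conj, Complex.normSq_eq_norm_sq, habs]
    norm_num
  have hconj : (starRingEnd ℂ) ω = ω⁻¹ := ((inv_eq_of_mul_eq_one_right hωconj).symm)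
  have hQ'conj : Q' = (starRingEnd ℂ) Q := by
    rw [hQ, map_prod]
    apply Finset.prod_congr rfl
    intro i _
    rw [map_sub, map_one, map_pow, hconj, inv_pow]
    congr 1
    exact (inv_eq_of_mul_eq_one_left (hkey i)).symm
  have hPnormSq : ∏ i ∈ Finset.range s₀, (1 - ω ^ 2 ^ i) = (Complex.normSq Q : ℂ) := by
    rw [hPQQ', hQ'conj, Complex.mul_conj]
  -- nonvanishing of factors
  have hfacne : ∀ i : ℕ, 1 - ω ^ 2 ^ i ≠ 0 := by
    intro i h
    have h1 : ω ^ 2 ^ i = 1 := by linear_combination -h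
    have hdvd := (hω.pow_eq_one_iff_dvd (2 ^ i)).mp h1
    have : r₀ = 1 := Nat.eq_one_of_dvd_coprimes (Nat.Coprime.pow_right i hcop2.symm) dvd_rfl hdvd
    omega
  have hQne : Q ≠ 0 := Finset.prod_ne_zero_iff.mpr fun i _ => hfacne i
  constructor
  · rw [hPnormSq]; exact Complex.ofReal_im _
  rintro ⟨z, hz⟩
  -- Step 1 : z = 1
  -- product over all primitive roots is 1
  have hnotpp : ∀ {p : ℕ}, p.Prime → ∀ k : ℕ, p ^ k ≠ r₀ := by
    intro p hp k hpk
    rcases Nat.eq_zero_or_pos k with rfl | hk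
    · simp at hpk; omega
    · rw [← hpk, Nat.primeFactors_prime_pow hk.ne' hp] at hfac
      simp at hfac
  have hfull : ∏ μ ∈ primitiveRoots r₀ ℂ, (1 - μ) = 1 := by
    have h1 := Polynomial.cyclotomic_eq_prod_X_sub_primitiveRoots hω
    have h2 : Polynomial.eval 1 (Polynomial.cyclotomic r₀ ℂ) = 1 :=
      Polynomial.eval_one_cyclotomic_not_prime_pow (R := ℂ) hnotpp
    rw [h1, Polynomial.eval_prod] at h2
    simpa using h2
  -- the image of i ↦ ω ^ 2 ^ i
  have hords : orderOf (2 : ZMod r₀) = s₀ := hs₀.symm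
  have h2s : (2 : ZMod r₀) ^ s₀ = 1 := by
    rw [hst, pow_add, hneg]
    ring
  have hinj : ∀ i ∈ Finset.range s₀, ∀ j ∈ Finset.range s₀,
      ω ^ 2 ^ i = ω ^ 2 ^ j → i = j := by
    have key : ∀ i j : ℕ, i ≤ j → j < s₀ → ω ^ 2 ^ i = ω ^ 2 ^ j → i = j := by
      intro i j hij hjs hωij
      have hple : (2 : ℕ) ^ i ≤ 2 ^ j := Nat.pow_le_pow_right (by norm_num) (by omega)
      have hsub : ω ^ (2 ^ j - 2 ^ i) = 1 := by
        have hmul : ω ^ 2 ^ i * ω ^ (2 ^ j - 2 ^ i) = ω ^ 2 ^ i * 1 := by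
          rw [← pow_add, Nat.add_sub_cancel' hple, mul_one, hωij]
        exact mul_left_cancel₀ (pow_ne_zero _ hωne) hmul
      have hdvd0 : r₀ ∣ 2 ^ j - 2 ^ i := (hω.pow_eq_one_iff_dvd _).mp hsub
      have hcast : ((2 ^ j - 2 ^ i : ℕ) : ZMod r₀) = 0 :=
        (ZMod.natCast_eq_zero_iff _ r₀).mpr hdvd0
      rw [Nat.cast_sub hple] at hcast
      push_cast at hcast
      have hmod : (2 : ZMod r₀) ^ i = (2 : ZMod r₀) ^ j := by linear_combination -hcast
      have hpow : (2 : ZMod r₀) ^ (i + (s₀ - j)) = 1 := by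
        rw [pow_add, hmod, ← pow_add]
        have : j + (s₀ - j) = s₀ := by omega
        rw [this, h2s]
      have hdvd : s₀ ∣ i + (s₀ - j) := by
        have h0 : orderOf (2 : ZMod r₀) ∣ i + (s₀ - j) := orderOf_dvd_of_pow_eq_one hpow
        rwa [← hs₀] at h0
      have hle := Nat.le_of_dvd (by omega) hdvd
      omega
    intro i hi j hj h
    simp only [Finset.mem_range] at hi hj
    rcases le_total i j with hij | hji
    · exact key i j hij hj h
    · exact (key j i hji hi h.symm).symm
  set T : Finset ℂ := (Finset.range s₀).image (fun i => ω ^ 2 ^ i) with hT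
  have hTS : T ⊆ primitiveRoots r₀ ℂ := by
    intro μ hμ
    rw [hT, Finset.mem_image] at hμ
    obtain ⟨i, _, rfl⟩ := hμ
    rw [mem_primitiveRoots hrpos]
    exact hω.pow_of_coprime (2 ^ i) (Nat.Coprime.pow_left i hcop2)
  have hPT : ∏ i ∈ Finset.range s₀, (1 - ω ^ 2 ^ i) = ∏ μ ∈ T, (1 - μ) := by
    rw [hT, Finset.prod_image hinj]
  have hXP : (∏ μ ∈ primitiveRoots r₀ ℂ \ T, (1 - μ)) *
      (∏ i ∈ Finset.range s₀, (1 - ω ^ 2 ^ i)) = 1 := by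
    rw [hPT, Finset.prod_sdiff hTS, hfull]
  -- integrality of the cofactor
  have hXint : IsIntegral ℤ (∏ μ ∈ primitiveRoots r₀ ℂ \ T, (1 - μ)) := by
    have : (∏ μ ∈ primitiveRoots r₀ ℂ \ T, (1 - μ)) ∈ integralClosure ℤ ℂ := by
      apply Subalgebra.prod_mem
      intro μ hμ
      have hμ' := (mem_primitiveRoots hrpos).mp (Finset.mem_sdiff.mp hμ).1
      exact sub_mem (one_mem _) (hμ'.isIntegral hrpos)
    exact this
  -- positivity
  have hzpos : 0 < z := by
    have h1 : ((z : ℤ) : ℂ) = ((Complex.normSq Q : ℝ) : ℂ) := by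
      rw [← hz, hPnormSq]
    have h2 : ((z : ℤ) : ℝ) = Complex.normSq Q := by exact_mod_cast h1
    have h3 : 0 < Complex.normSq Q := Complex.normSq_pos.mpr hQne
    exact_mod_cast h2 ▸ h3
  have hzne : (z : ℂ) ≠ 0 := Int.cast_ne_zero.mpr hzpos.ne'
  -- from hXP : X * z = 1, X = (z : ℂ)⁻¹ is integral
  have hXval : (∏ μ ∈ primitiveRoots r₀ ℂ \ T, (1 - μ)) = (z : ℂ)⁻¹ := by
    rw [hz] at hXP
    field_simp at hXP ⊢
    linear_combination hXP
  have hint2 : IsIntegral ℤ ((z : ℂ)⁻¹) := hXval ▸ hXint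
  have hint3 : IsIntegral ℤ ((z : ℚ)⁻¹) := by
    have hmap : algebraMap ℚ ℂ ((z : ℚ)⁻¹) = (z : ℂ)⁻¹ := by
      push_cast; rfl
    exact (isIntegral_algebraMap_iff (algebraMap ℚ ℂ).injective).mp (hmap ▸ hint2)
  obtain ⟨y, hy⟩ := IsIntegrallyClosed.isIntegral_iff.mp hint3
  have hzy : z * y = 1 := by
    have hq : (z : ℚ) * (y : ℚ) = 1 := by
      have : (y : ℚ) = (z : ℚ)⁻¹ := by exact_mod_cast hy
      rw [this, mul_inv_cancel₀]
      exact_mod_cast hzpos.ne'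
    exact_mod_cast hq
  have hz1 : z = 1 := by
    have hu := Int.isUnit_iff.mp (IsUnit.of_mul_eq_one y hzy)
    rcases hu with h | h
    · exact h
    · omega
  have hP1 : ∏ i ∈ Finset.range s₀, (1 - ω ^ 2 ^ i) = 1 := by
    rw [hz, hz1]; norm_num
  -- Step 2 : structure  Q' = (-1)^t * ω^2 * Q
  have hsum : ω ^ (∑ i ∈ Finset.range t, 2 ^ i) * ω ^ 2 = 1 := by
    rw [← pow_add]
    apply hωpow
    push_cast
    have hgeom := geom_sum_mul (2 : ZMod r₀) t
    rw [show (2 : ZMod r₀) - 1 = 1 by ring, mul_one] at hgeom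
    rw [hgeom]
    rw [show ((t : ℕ) : ℕ) = t from rfl] at *
    have : (2 : ZMod r₀) ^ t = -1 := hneg
    rw [this]
    ring
  have hprodpow : ∏ i ∈ Finset.range t, ω ^ 2 ^ i = ω ^ (∑ i ∈ Finset.range t, 2 ^ i) :=
    Finset.prod_pow_eq_pow_sum _ _ _
  have hQ'eq : Q' = (-1) ^ t * ω ^ 2 * Q := by
    have hfactor : ∀ i ∈ Finset.range t,
        (1 - ω ^ 2 ^ (t + i)) = (-1) * (ω ^ 2 ^ i)⁻¹ * (1 - ω ^ 2 ^ i) := by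
      intro i _
      have hx : ω ^ 2 ^ (t + i) = (ω ^ 2 ^ i)⁻¹ := (inv_eq_of_mul_eq_one_left (hkey i)).symm
      have hne2 : ω ^ 2 ^ i ≠ 0 := pow_ne_zero _ hωne
      field_simp [hx]
      rw [sub_mul, one_mul, hkey i]; ring
    have hinv : (ω ^ (∑ i ∈ Finset.range t, 2 ^ i))⁻¹ = ω ^ 2 :=
      inv_eq_of_mul_eq_one_left (by linear_combination hsum)
    have hpi : ∏ i ∈ Finset.range t, (ω ^ 2 ^ i)⁻¹ = ω ^ 2 := by
      rw [Finset.prod_inv_distrib, hprodpow, hinv]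
    rw [hQ', Finset.prod_congr rfl hfactor, Finset.prod_mul_distrib, Finset.prod_mul_distrib]
    rw [Finset.prod_const, Finset.card_range, hpi, hQ]
  set R : ℂ := ω * Q with hR
  have hR2 : R ^ 2 = (-1) ^ t := by
    have h1' := hP1
    rw [hPQQ', hQ'eq] at h1'
    have h2 : R ^ 2 = ω ^ 2 * Q ^ 2 := by rw [hR]; ring
    have ht2 : ((-1 : ℂ) ^ t) * ((-1 : ℂ) ^ t) = 1 := by
      rw [← pow_add, ← two_mul, pow_mul]; norm_num
    calc R ^ 2 = ω ^ 2 * Q ^ 2 := h2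
      _ = ((-1) ^ t * (-1) ^ t) * (ω ^ 2 * Q ^ 2) := by rw [ht2, one_mul]
      _ = (-1) ^ t * (Q * ((-1) ^ t * ω ^ 2 * Q)) := by ring
      _ = (-1) ^ t * 1 := by rw [h1']
      _ = (-1) ^ t := mul_one _
  -- polynomial g with g(ω) = R, g(ω²) = -R
  set g : Polynomial ℚ := Polynomial.X * ∏ i ∈ Finset.range t, (1 - Polynomial.X ^ 2 ^ i)
    with hg
  have hgω : Polynomial.aeval ω g = R := by
    rw [hg, map_mul, map_prod, Polynomial.aeval_X]
    rw [hR, hQ]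
    congr 1
    apply Finset.prod_congr rfl
    intro i _
    rw [map_sub, map_one, map_pow, Polynomial.aeval_X]
  have hω2t : ω ^ 2 ^ t = ω⁻¹ := by
    have := hkey 0
    simp only [add_zero, pow_zero, pow_one] at this
    exact (inv_eq_of_mul_eq_one_left this).symm
  have hωn1 : ω ≠ 1 := hω.ne_one hr₀
  have hgω2 : Polynomial.aeval (ω ^ 2) g = -R := by
    rw [hg, map_mul, map_prod, Polynomial.aeval_X]
    have hterm : ∀ i ∈ Finset.range t,
        Polynomial.aeval (ω ^ 2) (1 - Polynomial.X ^ 2 ^ i : Polynomial ℚ)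
          = 1 - ω ^ 2 ^ (i + 1) := by
      intro i _
      rw [map_sub, map_one, map_pow, Polynomial.aeval_X, ← pow_mul, pow_succ, mul_comm (2^i) 2]
    rw [Finset.prod_congr rfl hterm]
    -- telescoping
    have htel : (1 - ω) * ∏ i ∈ Finset.range t, (1 - ω ^ 2 ^ (i + 1))
        = Q * (1 - ω ^ 2 ^ t) := by
      have h1 := Finset.prod_range_succ (fun i => 1 - ω ^ 2 ^ i) t
      have h2 := Finset.prod_range_succ' (fun i => 1 - ω ^ 2 ^ i) t
      rw [h2] at h1
      simp only [pow_zero, pow_one] at h1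
      rw [hQ]
      linear_combination h1
    have hω1ne : (1 : ℂ) - ω ≠ 0 := sub_ne_zero.mpr (Ne.symm hωn1)
    have hstep : ∏ i ∈ Finset.range t, (1 - ω ^ 2 ^ (i + 1)) = -ω⁻¹ * (1 - ω) * Q / (1 - ω) := by
      rw [eq_div_iff hω1ne]
      have hrhs : (1 - ω ^ 2 ^ t) = -ω⁻¹ * (1 - ω) := by
        rw [hω2t]
        field_simp
        ring
      calc (∏ i ∈ Finset.range t, (1 - ω ^ 2 ^ (i + 1))) * (1 - ω)
          = Q * (1 - ω ^ 2 ^ t) := by linear_combination htel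
        _ = -ω⁻¹ * (1 - ω) * Q := by rw [hrhs]; ring
    rw [hstep]
    rw [hR]
    field_simp
  -- minpoly facts
  have hωint : IsIntegral ℚ ω := ((hω.isIntegral hrpos).tower_top : IsIntegral ℚ ω)
  have hmin : minpoly ℚ ω = Polynomial.cyclotomic r₀ ℚ :=
    (Polynomial.cyclotomic_eq_minpoly_rat hω hrpos).symm
  have hω2prim : IsPrimitiveRoot (ω ^ 2) r₀ := hω.pow_of_coprime 2 hcop2
  have hmin2 : minpoly ℚ (ω ^ 2) = Polynomial.cyclotomic r₀ ℚ :=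
    (Polynomial.cyclotomic_eq_minpoly_rat hω2prim hrpos).symm
  rcases Nat.even_or_odd t with hte | hto
  · -- t even : R² = 1, R = ±1, contradiction via conjugate ω²
    have hR21 : R ^ 2 = 1 := by rw [hR2, hte.neg_one_pow]
    have hR1 : R = 1 ∨ R = -1 := by
      have hfac2 : (R - 1) * (R + 1) = 0 := by linear_combination hR21
      rcases mul_eq_zero.mp hfac2 with h | h
      · left; linear_combination h
      · right; linear_combination h
    have key : ∀ c : ℚ, (c : ℂ) ≠ 0 → (c : ℂ) = R → False := by
      intro c hc0 hcR
      have hf : Polynomial.aeval ω (g - Polynomial.C c) = 0 := by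
        rw [map_sub, hgω, Polynomial.aeval_C, ← hcR, eq_ratCast (algebraMap ℚ ℂ) c]
        ring
      have hdvd : minpoly ℚ (ω ^ 2) ∣ (g - Polynomial.C c) := by
        rw [hmin2, ← hmin]
        exact minpoly.dvd ℚ ω hf
      obtain ⟨q, hq⟩ := hdvd
      have hf2 : Polynomial.aeval (ω ^ 2) (g - Polynomial.C c) = 0 := by
        rw [hq, map_mul, minpoly.aeval, zero_mul]
      rw [map_sub, hgω2, Polynomial.aeval_C, eq_ratCast (algebraMap ℚ ℂ) c] at hf2
      have hthis : -R = (c : ℂ) := by linear_combination hf2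
      rw [hcR] at hthis
      apply hc0
      rw [hcR]
      linear_combination -hthis / 2
    rcases hR1 with h1 | h1
    · exact key 1 (by norm_num) (by rw [h1]; norm_num)
    · exact key (-1) (by norm_num) (by rw [h1]; norm_num)
  · -- t odd : R² = -1, so ωR is a primitive 4r₀-th root inside ℚ(ω): degree contradiction
    have hR2n : R ^ 2 = -1 := by rw [hR2, hto.neg_one_pow]
    have hR4 : orderOf R = 4 := by
      have h2 : R ^ (2 : ℕ) ^ 1 ≠ 1 := by
        rw [pow_one, hR2n]
        intro h
        norm_num at h
      have h4 : R ^ (2 : ℕ) ^ 2 = 1 := by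
        have : R ^ 4 = (R ^ 2) ^ 2 := by ring
        rw [show ((2 : ℕ) ^ 2) = 4 from rfl, this, hR2n]
        norm_num
      haveI : Fact (Nat.Prime 2) := ⟨Nat.prime_two⟩
      exact orderOf_eq_prime_pow h2 h4
    have hωord : orderOf ω = r₀ := hω.eq_orderOf.symm
    have hcoprime4 : Nat.Coprime r₀ 4 := by
      have : Nat.Coprime r₀ (2 ^ 2) := (Nat.Coprime.pow_right 2 hcop2.symm)
      simpa using this
    have hord : orderOf (ω * R) = r₀ * 4 := by
      rw [(Commute.all ω R).orderOf_mul_eq_mul_orderOf_of_coprime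
        (by rw [hωord, hR4]; exact hcoprime4), hωord, hR4]
    have hμprim : IsPrimitiveRoot (ω * R) (r₀ * 4) := hord ▸ IsPrimitiveRoot.orderOf (ω * R)
    -- degree of minpoly of ω*R is totient (r₀*4) = 2 * totient r₀
    have hminμ : minpoly ℚ (ω * R) = Polynomial.cyclotomic (r₀ * 4) ℚ :=
      (Polynomial.cyclotomic_eq_minpoly_rat hμprim (by positivity)).symm
    -- ω*R lies in ℚ⟮ω⟯
    haveI := IntermediateField.adjoin.finiteDimensional hωint
    set gen : ℚ⟮ω⟯ := IntermediateField.AdjoinSimple.gen ℚ ω with hgen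
    set μ' : ℚ⟮ω⟯ := gen ^ 2 * ∏ i ∈ Finset.range t, (1 - gen ^ 2 ^ i) with hμ'
    have hmap : algebraMap ℚ⟮ω⟯ ℂ μ' = ω * R := by
      rw [hμ', map_mul, map_pow, map_prod]
      have hgm : algebraMap ℚ⟮ω⟯ ℂ gen = ω := IntermediateField.AdjoinSimple.algebraMap_gen ℚ ω
      rw [hgm]
      have : ∀ i ∈ Finset.range t,
          algebraMap ℚ⟮ω⟯ ℂ (1 - gen ^ 2 ^ i) = 1 - ω ^ 2 ^ i := by
        intro i _
        rw [map_sub, map_one, map_pow, hgm]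
      rw [Finset.prod_congr rfl this, hR, hQ]
      ring
    have hminμ' : minpoly ℚ (ω * R) = minpoly ℚ μ' := by
      rw [← hmap]
      exact minpoly.algebraMap_eq (algebraMap ℚ⟮ω⟯ ℂ).injective μ'
    have hdeg1 : (minpoly ℚ μ').natDegree ≤ Module.finrank ℚ ℚ⟮ω⟯ := minpoly.natDegree_le μ'
    have hfr : Module.finrank ℚ ℚ⟮ω⟯ = r₀.totient := by
      rw [IntermediateField.adjoin.finrank hωint, hmin, Polynomial.natDegree_cyclotomic]
    have hdeg2 : (minpoly ℚ μ').natDegree = (r₀ * 4).totient := by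
      rw [← hminμ', hminμ, Polynomial.natDegree_cyclotomic]
    have htot : (r₀ * 4).totient = r₀.totient * 2 := by
      rw [Nat.totient_mul hcoprime4, show Nat.totient 4 = 2 by decide]
    have htpos' : 0 < r₀.totient := Nat.totient_pos.mpr hrpos
    rw [hdeg2, hfr, htot] at hdeg1
    omega
end

section
/- Let r₀ > 1 be odd, ω a primitive r₀-th root of unity, and s₀ the multiplicative order of 2 modulo r₀. If 2^{s₀/2} ≡ -1 (mod r₀) with s₀ even, then T(2^{s₀}; ω) = |T(2^{s₀/2}; ω)|², where T(2^s; z) = ∏_{i=0}^{s-1}(1 - z^{2^i}). In particular T(2^{s₀}; ω) is a nonnegative real number. -/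
open Finset

theorem tmProd_eq_sq_abs (r₀ : ℕ) (hr₀ : 1 < r₀) (hodd : Odd r₀) (ω : ℂ)
    (hω : IsPrimitiveRoot ω r₀) (s₀ : ℕ) (hs₀ : s₀ = orderOf (2 : ZMod r₀))
    (heven : Even s₀) (hneg : (2 : ZMod r₀) ^ (s₀ / 2) = -1) :
    ∏ i ∈ Finset.range s₀, (1 - ω ^ (2 ^ i)) =
      ((‖∏ i ∈ Finset.range (s₀ / 2), (1 - ω ^ (2 ^ i))‖ ^ 2 : ℝ) : ℂ) := by
  have habs : ‖ω‖ = 1 := Complex.norm_eq_one_of_pow_eq_one hω.pow_eq_one (by omega)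
  have hωne : ω ≠ 0 := by
    intro h; simp [h] at habs
  have hdvd : r₀ ∣ 2 ^ (s₀ / 2) + 1 := by
    have : ((2 ^ (s₀ / 2) + 1 : ℕ) : ZMod r₀) = 0 := by push_cast [hneg]; ring
    exact (ZMod.natCast_eq_zero_iff _ _).mp this
  have hω1 : ω ^ (2 ^ (s₀ / 2) + 1) = 1 := by
    obtain ⟨k, hk⟩ := hdvd
    rw [hk, pow_mul, hω.pow_eq_one, one_pow]
  have hconj : ω ^ (2 ^ (s₀ / 2)) = (starRingEnd ℂ) ω := by
    rw [← Complex.inv_eq_conj habs]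
    exact eq_inv_of_mul_eq_one_left (by rw [← pow_succ]; exact hω1)
  have hs : s₀ = s₀ / 2 + s₀ / 2 := by
    obtain ⟨m, hm⟩ := heven; omega
  conv_lhs => rw [hs, Finset.prod_range_add]
  have h2 : ∀ j, (1 : ℂ) - ω ^ 2 ^ (s₀ / 2 + j) =
      (starRingEnd ℂ) (1 - ω ^ 2 ^ j) := by
    intro j
    rw [pow_add, pow_mul, hconj, ← map_pow, map_sub, map_one]
  rw [Finset.prod_congr rfl (fun j _ => h2 j), ← map_prod, Complex.mul_conj, ← Complex.sq_norm]
end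

section
/- Let ω = 1 and define the Rudin–Shapiro sequence r by r(0)=1, r(2n)=r(n), r(2n+1)=(-1)^n·r(n), with R(n) = ∑_{m=0}^{n-1} r(m). Then for all n ≥ 1, R(16n) - 4·R(4n) + 4·R(n) = 0. -/
open Finset

theorem rudinShapiro_recurrence_one (r : ℕ → ℤ) (h0 : r 0 = 1)
    (heven : ∀ n : ℕ, r (2 * n) = r n)
    (hoddr : ∀ n : ℕ, r (2 * n + 1) = (-1) ^ n * r n)
    (R : ℕ → ℤ) (hR : ∀ n : ℕ, R n = ∑ m ∈ Finset.range n, r m) :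
    ∀ n : ℕ, 1 ≤ n → R (16 * n) - 4 * R (4 * n) + 4 * R n = 0 := by
  -- key: summing a function over range (2*n) splits into pairs
  have key : ∀ (f : ℕ → ℤ) (n : ℕ),
      (∑ m ∈ Finset.range (2 * n), f m) =
        ∑ k ∈ Finset.range n, (f (2 * k) + f (2 * k + 1)) := by
    intro f n
    induction n with
    | zero => simp
    | succ n ih =>
      have h2 : 2 * (n + 1) = (2 * n + 1) + 1 := by ring
      rw [h2, Finset.sum_range_succ, Finset.sum_range_succ, ih, Finset.sum_range_succ]
      ring
  set S : ℕ → ℤ := fun n => ∑ k ∈ Finset.range n, (-1) ^ k * r k with hS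
  have hR2 : ∀ n, R (2 * n) = R n + S n := by
    intro n
    rw [hR, key r n, hR, hS]
    simp only
    rw [← Finset.sum_add_distrib]
    apply Finset.sum_congr rfl
    intro k _
    rw [heven, hoddr]
  have hS2 : ∀ n, S (2 * n) = R n - S n := by
    intro n
    rw [hS]
    simp only
    rw [key (fun k => (-1) ^ k * r k) n, hR]
    rw [← Finset.sum_sub_distrib]
    apply Finset.sum_congr rfl
    intro k _
    rw [heven, hoddr]
    have h1 : ((-1 : ℤ)) ^ (2 * k) = 1 := by
      rw [pow_mul]; norm_num
    have h2 : ((-1 : ℤ)) ^ (2 * k + 1) = -1 := by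
      rw [pow_succ, h1]; ring
    rw [h1, h2]
    ring
  have hR4 : ∀ n, R (4 * n) = 2 * R n := by
    intro n
    have h4 : 4 * n = 2 * (2 * n) := by ring
    rw [h4, hR2, hS2, hR2]
    ring
  intro n _
  have h16 : (16 : ℕ) * n = 4 * (4 * n) := by ring
  rw [h16, hR4, hR4]
  ring
end
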